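/- arXiv:1904.12273 — 3 statements merged into one kernel-verified Lean document; each statement's English description precedes it below -/
import Mathlib

section
/- Let $G$ be a graph and let $H$ be the graph obtained from $G$ by subdividing every edge of $G$ exactly once. Let $n=|V(G)|$. Then $H$ has an induced cycle of length at least $2n$ if and only if $G$ has a Hamilton cycle. -/
open SimpleGraph

namespace LOH

variable {V : Type*}

/-- A hole: an induced cycle. -/
def IsInducedCycle (G : SimpleGraph V) {v : V} (c : G.Walk v v) : Prop :=
  c.IsCycle ∧ ∀ x y : V, x ∈ c.support → y ∈ c.support → G.Adj x y → s(x, y) ∈ c.edges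

/-- An induced path. -/
def IsInducedPath (G : SimpleGraph V) {u v : V} (p : G.Walk u v) : Prop :=
  p.IsPath ∧ ∀ x y : V, x ∈ p.support → y ∈ p.support → G.Adj x y → s(x, y) ∈ p.edges

/-- A long odd hole: an induced cycle of odd length at least `ℓ`. -/
def IsLongOddHole (G : SimpleGraph V) (ℓ : ℕ) {v : V} (c : G.Walk v v) : Prop :=
  IsInducedCycle G c ∧ ℓ ≤ c.length ∧ Odd c.length

/-- A shortest long odd hole. -/
def IsShortestLongOddHole (G : SimpleGraph V) (ℓ : ℕ) {v : V} (c : G.Walk v v) : Prop :=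
  IsLongOddHole G ℓ c ∧ ∀ (w : V) (d : G.Walk w w), IsLongOddHole G ℓ d → c.length ≤ d.length

/-- The interior of a path: its vertices other than the two ends. -/
def interiorSet {G : SimpleGraph V} {u v : V} (p : G.Walk u v) : Set V :=
  {x | x ∈ p.support ∧ x ≠ u ∧ x ≠ v}

/-- `x` is `C`-major if no three-vertex subpath of `C` contains all neighbours of `x` in `V(C)`. -/
def CMajor (G : SimpleGraph V) {v : V} (c : G.Walk v v) (x : V) : Prop :=
  x ∉ c.support ∧
    ¬ ∃ a b d : V, s(a, b) ∈ c.edges ∧ s(b, d) ∈ c.edges ∧ a ≠ d ∧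
      ∀ y : V, y ∈ c.support → G.Adj x y → y = a ∨ y = b ∨ y = d

/-- A hole is clean if there are no `C`-major vertices. -/
def IsClean (G : SimpleGraph V) {v : V} (c : G.Walk v v) : Prop :=
  ∀ x : V, ¬ CMajor G c x

/-- `p` is a subpath of the closed walk `c`. -/
def IsSubpath (G : SimpleGraph V) {v a b : V} (c : G.Walk v v) (p : G.Walk a b) : Prop :=
  p.IsPath ∧ (∀ x ∈ p.support, x ∈ c.support) ∧ ∀ e ∈ p.edges, e ∈ c.edges

/-- A long pyramid with apex `v0`, base `{v1,v2,v3}`, formed by `P1,P2,P3`. -/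
def IsLongPyramid (G : SimpleGraph V) (ℓ : ℕ) {v0 v1 v2 v3 : V}
    (P1 : G.Walk v0 v1) (P2 : G.Walk v0 v2) (P3 : G.Walk v0 v3) : Prop :=
  P1.IsPath ∧ P2.IsPath ∧ P3.IsPath ∧
  v1 ≠ v0 ∧ v2 ≠ v0 ∧ v3 ≠ v0 ∧
  G.Adj v1 v2 ∧ G.Adj v1 v3 ∧ G.Adj v2 v3 ∧
  (∀ x : V, x ∈ P1.support → x ∈ P2.support → x = v0) ∧
  (∀ x : V, x ∈ P1.support → x ∈ P3.support → x = v0) ∧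
  (∀ x : V, x ∈ P2.support → x ∈ P3.support → x = v0) ∧
  ((ℓ ≤ P1.length ∧ ℓ ≤ P2.length) ∨ (ℓ ≤ P1.length ∧ ℓ ≤ P3.length) ∨
    (ℓ ≤ P2.length ∧ ℓ ≤ P3.length)) ∧
  (∀ x y : V, x ∈ P1.support → x ≠ v0 → y ∈ P2.support → y ≠ v0 → G.Adj x y →
      x = v1 ∧ y = v2) ∧
  (∀ x y : V, x ∈ P1.support → x ≠ v0 → y ∈ P3.support → y ≠ v0 → G.Adj x y →
      x = v1 ∧ y = v3) ∧
  (∀ x y : V, x ∈ P2.support → x ≠ v0 → y ∈ P3.support → y ≠ v0 → G.Adj x y →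
      x = v2 ∧ y = v3)

def HasLongPyramid (G : SimpleGraph V) (ℓ : ℕ) : Prop :=
  ∃ (v0 v1 v2 v3 : V) (P1 : G.Walk v0 v1) (P2 : G.Walk v0 v2) (P3 : G.Walk v0 v3),
    IsLongPyramid G ℓ P1 P2 P3

/-- A long jewel formed by `Q1, Q2, P`. -/
def IsLongJewel (G : SimpleGraph V) (ℓ : ℕ) {u v : V} (Q1 Q2 P : G.Walk u v) : Prop :=
  Q1.IsPath ∧ Q2.IsPath ∧ P.IsPath ∧
  ¬ (Q1.length % 2 = Q2.length % 2) ∧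
  ℓ ≤ P.length ∧
  ∀ x ∈ interiorSet P, ∀ y ∈ interiorSet Q1 ∪ interiorSet Q2, x ≠ y ∧ ¬ G.Adj x y

def HasLongJewelOfOrderLE (G : SimpleGraph V) (ℓ k : ℕ) : Prop :=
  ∃ (u v : V) (Q1 Q2 P : G.Walk u v), IsLongJewel G ℓ Q1 Q2 P ∧
    max (Q1.length + 1) (Q2.length + 1) ≤ k

/-- A candidate: no long pyramid, no long jewel of order at most `ℓ+2`, and no long odd
hole of length at most `2ℓ+2`. -/
def Candidate (G : SimpleGraph V) (ℓ : ℕ) : Prop :=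
  ¬ HasLongPyramid G ℓ ∧ ¬ HasLongJewelOfOrderLE G ℓ (ℓ + 2) ∧
  ¬ ∃ (v : V) (c : G.Walk v v), IsLongOddHole G ℓ c ∧ c.length ≤ 2 * ℓ + 2

/-- A `(u,w)`-gap: a subpath `p` of `c` whose vertex set is the interior of an
induced path of `G` between `u` and `w`. -/
def IsGap (G : SimpleGraph V) {v a b : V} (c : G.Walk v v) (u w : V)
    (p : G.Walk a b) : Prop :=
  IsSubpath G c p ∧
    ∃ (q : G.Walk u w), IsInducedPath G q ∧ {x : V | x ∈ p.support} = interiorSet q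

/-- Two vertex sets are anticomplete: disjoint, with no edges between them. -/
def Anticomplete (G : SimpleGraph V) (A B : Set V) : Prop :=
  Disjoint A B ∧ ∀ a ∈ A, ∀ b ∈ B, ¬ G.Adj a b

/-- Distance between two vertices measured inside the cycle `c`. -/
noncomputable def cycleDist (G : SimpleGraph V) {v : V} (c : G.Walk v v) (a b : V) : ℕ :=
  sInf {n | ∃ (p : G.Walk a b), IsSubpath G c p ∧ p.length = n}

/-- A base `(x, D)` for the hole `c`. -/
def IsBase (G : SimpleGraph V) {v d1 d2 : V} (c : G.Walk v v) (x : V)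
    (D : G.Walk d1 d2) : Prop :=
  CMajor G c x ∧ IsSubpath G c D ∧ G.Adj x d1 ∧ G.Adj x d2 ∧
  (∀ y ∈ interiorSet D, ¬ G.Adj x y) ∧
  (∀ (e1 e2 : V) (D' : G.Walk e1 e2), IsSubpath G c D' →
      (∀ e ∈ D.edges, e ∈ D'.edges) → G.Adj x e1 → G.Adj x e2 →
      (∀ y ∈ interiorSet D', ¬ G.Adj x y) → ∀ e ∈ D'.edges, e ∈ D.edges)

/-- A remote base. -/
def IsRemoteBase (G : SimpleGraph V) (ℓ : ℕ) {v d1 d2 : V} (c : G.Walk v v) (x : V)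
    (D : G.Walk d1 d2) : Prop :=
  IsBase G c x D ∧ 2 * ℓ ≤ D.length ∧
  ∀ y : V, CMajor G c y → y ≠ x → ∀ w ∈ c.support, G.Adj y w →
    ℓ ≤ cycleDist G c w d1 ∧ ℓ ≤ cycleDist G c w d2


/-- The graph obtained from `G` by subdividing every edge exactly once: each
edge `uv` is replaced by a new vertex adjacent exactly to `u` and `v`. -/
def subdivide {V : Type*} (G : SimpleGraph V) : SimpleGraph (V ⊕ G.edgeSet) where
  Adj x y :=
    match x, y with
    | Sum.inl u, Sum.inr e => u ∈ (e : Sym2 V)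
    | Sum.inr e, Sum.inl u => u ∈ (e : Sym2 V)
    | _, _ => False
  symm := ⟨by rintro (u | e) (w | f) h <;> simp_all⟩
  loopless := ⟨by rintro (u | e) h <;> simp_all⟩

lemma subdivide_adj_lr {G : SimpleGraph V} {u : V} {e : G.edgeSet} :
    (subdivide G).Adj (Sum.inl u) (Sum.inr e) ↔ u ∈ (e : Sym2 V) := Iff.rfl

lemma subdivide_adj_rl {G : SimpleGraph V} {u : V} {e : G.edgeSet} :
    (subdivide G).Adj (Sum.inr e) (Sum.inl u) ↔ u ∈ (e : Sym2 V) := Iff.rfl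

lemma subdivide_adj_ll {G : SimpleGraph V} {u w : V} :
    ¬ (subdivide G).Adj (Sum.inl u) (Sum.inl w) := fun h => h

lemma subdivide_adj_rr {G : SimpleGraph V} {e f : G.edgeSet} :
    ¬ (subdivide G).Adj (Sum.inr e) (Sum.inr f) := fun h => h

lemma adj_lr' {G : SimpleGraph V} {u x : V} (h : G.Adj u x) :
    (subdivide G).Adj (Sum.inl u) (Sum.inr ⟨s(u, x), h⟩) := Sym2.mem_mk_left u x

lemma adj_rl' {G : SimpleGraph V} {u x : V} (h : G.Adj u x) :
    (subdivide G).Adj (Sum.inr (⟨s(u, x), h⟩ : G.edgeSet)) (Sum.inl x) := Sym2.mem_mk_right u x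

def sub {G : SimpleGraph V} : ∀ {u w : V}, G.Walk u w →
    (subdivide G).Walk (Sum.inl u) (Sum.inl w)
  | _, _, Walk.nil => Walk.nil
  | _, _, Walk.cons h p => Walk.cons (adj_lr' h) (Walk.cons (adj_rl' h) (sub p))

@[simp] lemma sub_nil {G : SimpleGraph V} {u : V} : sub (Walk.nil : G.Walk u u) = Walk.nil := rfl

@[simp] lemma sub_cons {G : SimpleGraph V} {u x w : V} (h : G.Adj u x) (p : G.Walk x w) :
    sub (Walk.cons h p) = Walk.cons (adj_lr' h) (Walk.cons (adj_rl' h) (sub p)) := rfl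

@[simp] lemma sub_length {G : SimpleGraph V} {u w : V} (p : G.Walk u w) :
    (sub p).length = 2 * p.length := by
  induction p with
  | nil => rfl
  | cons h p ih => simp [ih]; omega

@[simp] lemma sub_support_inl {G : SimpleGraph V} {u w x : V} (p : G.Walk u w) :
    Sum.inl x ∈ (sub p).support ↔ x ∈ p.support := by
  induction p with
  | nil => simp
  | cons h p ih => simp [ih]

@[simp] lemma sub_support_inr {G : SimpleGraph V} {u w : V} {f : G.edgeSet} (p : G.Walk u w) :
    Sum.inr f ∈ (sub p).support ↔ (f : Sym2 V) ∈ p.edges := by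
  induction p with
  | nil => simp
  | cons h p ih =>
      simp only [sub_cons, Walk.support_cons, List.mem_cons, Walk.edges_cons, ih]
      constructor
      · rintro (h1 | h1 | h1)
        · exact absurd h1 (by simp)
        · exact Or.inl (by injection h1 with h2; rw [h2])
        · exact Or.inr h1
      · rintro (h1 | h1)
        · exact Or.inr (Or.inl (by rw [show f = ⟨s(_,_), h⟩ from Subtype.ext h1]))
        · exact Or.inr (Or.inr h1)

lemma sub_edges_mem {G : SimpleGraph V} {u w : V} (p : G.Walk u w) :
    ∀ ed ∈ (sub p).edges, ∃ (f : G.edgeSet) (x : V),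
      ed = s(Sum.inl x, Sum.inr f) ∧ (f : Sym2 V) ∈ p.edges ∧ x ∈ (f : Sym2 V) := by
  induction p with
  | nil => simp
  | cons h p ih =>
      intro ed hed
      simp only [sub_cons, Walk.edges_cons, List.mem_cons] at hed
      rcases hed with h1 | h1 | h1
      · exact ⟨_, _, h1, by simp, Sym2.mem_mk_left _ _⟩
      · exact ⟨⟨s(_, _), h⟩, _, by rw [h1, Sym2.eq_swap], by simp, Sym2.mem_mk_right _ _⟩
      · obtain ⟨f, x, rfl, hf, hx⟩ := ih ed h1
        exact ⟨f, x, rfl, by simp [hf], hx⟩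

lemma sub_edges_mem' {G : SimpleGraph V} {u w : V} (p : G.Walk u w) (f : G.edgeSet) (x : V)
    (hf : (f : Sym2 V) ∈ p.edges) (hx : x ∈ (f : Sym2 V)) :
    s(Sum.inl x, Sum.inr f) ∈ (sub p).edges := by
  induction p with
  | nil => simp at hf
  | cons h p ih =>
      simp only [Walk.edges_cons, List.mem_cons] at hf
      simp only [sub_cons, Walk.edges_cons, List.mem_cons]
      rcases hf with h1 | h1
      · have hfe : f = ⟨s(_, _), h⟩ := Subtype.ext h1
        subst hfe
        rcases Sym2.mem_iff.mp hx with rfl | rfl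
        · exact Or.inl rfl
        · exact Or.inr (Or.inl (Sym2.eq_swap))
      · exact Or.inr (Or.inr (ih h1))

lemma sub_support_nodup {G : SimpleGraph V} {u w : V} (p : G.Walk u w)
    (hs : p.support.Nodup) (he : p.edges.Nodup) : (sub p).support.Nodup := by
  induction p with
  | nil => simp
  | cons h p ih =>
      simp only [Walk.support_cons, List.nodup_cons] at hs
      simp only [Walk.edges_cons, List.nodup_cons] at he
      simp only [sub_cons, Walk.support_cons, List.nodup_cons]
      refine ⟨?_, ?_, ih hs.2 he.2⟩
      · simp only [List.mem_cons]
        push_neg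
        exact ⟨by simp, by rw [sub_support_inl]; exact hs.1⟩
      · rw [sub_support_inr]
        intro hc
        exact hs.1 (Walk.fst_mem_support_of_mem_edges p hc)

lemma sub_edges_nodup {G : SimpleGraph V} {u w : V} (p : G.Walk u w)
    (he : p.edges.Nodup) : (sub p).edges.Nodup := by
  induction p with
  | nil => simp
  | cons h p ih =>
      simp only [Walk.edges_cons, List.nodup_cons] at he
      simp only [sub_cons, Walk.edges_cons, List.nodup_cons]
      refine ⟨?_, ?_, ih he.2⟩
      · simp only [List.mem_cons]
        push_neg
        constructor
        · intro hc
          rw [Sym2.eq_iff] at hc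
          rcases hc with ⟨hc, -⟩ | ⟨hc, -⟩
          · exact absurd hc (by simp)
          · injection hc with hc'
            exact h.ne hc'
        · intro hc
          obtain ⟨f, x, hx, hf, -⟩ := sub_edges_mem p _ hc
          rw [Sym2.eq_iff] at hx
          rcases hx with ⟨-, hx2⟩ | ⟨hx1, -⟩
          · injection hx2 with hx'
            exact he.1 (by rw [← hx'] at hf; exact hf)
          · exact absurd hx1 (by simp)
      · intro hc
        obtain ⟨f, x, hx, hf, -⟩ := sub_edges_mem p _ hc
        rw [Sym2.eq_iff] at hx
        rcases hx with ⟨hx1, -⟩ | ⟨hx2, -⟩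
        · exact absurd hx1 (by simp)
        · injection hx2 with hx'
          exact he.1 (by rw [← hx'] at hf; exact hf)

lemma sub_isCycle {G : SimpleGraph V} {v : V} {c : G.Walk v v} (hc : c.IsCycle) :
    (sub c).IsCycle := by
  cases c with
  | nil => exact absurd rfl hc.ne_nil
  | cons h q =>
      rw [Walk.cons_isCycle_iff] at hc
      obtain ⟨hq, hne⟩ := hc
      refine ⟨⟨⟨?_⟩, by simp [sub_cons]⟩, ?_⟩
      · exact sub_edges_nodup _ (by
          simp only [Walk.edges_cons, List.nodup_cons]
          exact ⟨hne, hq.isTrail.edges_nodup⟩)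
      · simp only [sub_cons, Walk.support_cons, List.tail_cons, List.nodup_cons]
        refine ⟨?_, sub_support_nodup q hq.support_nodup hq.isTrail.edges_nodup⟩
        rw [sub_support_inr]
        exact hne

lemma sub_induced {G : SimpleGraph V} {v : V} (c : G.Walk v v) :
    ∀ x y : V ⊕ G.edgeSet, x ∈ (sub c).support → y ∈ (sub c).support →
      (subdivide G).Adj x y → s(x, y) ∈ (sub c).edges := by
  rintro (a | e) (b | f) hx hy hadj
  · exact absurd hadj subdivide_adj_ll
  · rw [sub_support_inr] at hy
    exact sub_edges_mem' c f a hy hadj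
  · rw [sub_support_inl] at hy
    rw [sub_support_inr] at hx
    rw [Sym2.eq_swap]
    exact sub_edges_mem' c e b hx hadj
  · exact absurd hadj subdivide_adj_rr

def rightVal (G : SimpleGraph V) : V ⊕ G.edgeSet → Option (Sym2 V)
  | Sum.inl _ => none
  | Sum.inr e => some (e : Sym2 V)

@[simp] lemma rightVal_inl {G : SimpleGraph V} (x : V) : rightVal G (Sum.inl x) = none := rfl
@[simp] lemma rightVal_inr {G : SimpleGraph V} (e : G.edgeSet) :
    rightVal G (Sum.inr e) = some (e : Sym2 V) := rfl

lemma desub {G : SimpleGraph V} : ∀ (n : ℕ) (u w : V) (b : V ⊕ G.edgeSet)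
    (p : (subdivide G).Walk (Sum.inl u) b), p.length = n → p.IsTrail →
    b = Sum.inl w →
    ∃ q : G.Walk u w, q.support = p.support.filterMap Sum.getLeft? ∧
      q.edges = p.support.filterMap (rightVal G) ∧
      2 * q.length = p.length := by
  intro n
  induction n using Nat.strong_induction_on with
  | _ n ih =>
    intro u w b p hlen htrail hb
    cases p with
    | nil =>
        injection hb with hb'
        subst hb'
        exact ⟨Walk.nil, by simp, by simp, by simp⟩
    | cons h p₂ =>
        rename_i z
        cases z with
        | inl a => exact absurd h subdivide_adj_ll
        | inr e =>
          cases p₂ with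
          | nil => simp at hb
          | cons h' p₃ =>
            rename_i z'
            cases z' with
            | inr f => exact absurd h' subdivide_adj_rr
            | inl a =>
              rw [Walk.isTrail_cons] at htrail
              obtain ⟨ht2, hmem⟩ := htrail
              rw [Walk.isTrail_cons] at ht2
              obtain ⟨ht3, -⟩ := ht2
              have hne : u ≠ a := by
                rintro rfl
                exact hmem (by
                  rw [Walk.edges_cons, List.mem_cons]
                  exact Or.inl (Sym2.eq_swap))
              have he : (e : Sym2 V) = s(u, a) :=
                (Sym2.mem_and_mem_iff hne).mp ⟨h, h'⟩
              have hadj : G.Adj u a := by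
                have := e.property
                rwa [he] at this
              simp only [Walk.length_cons] at hlen
              obtain ⟨q', hs, hed, hl⟩ := ih (p₃.length) (by omega) a w b p₃ rfl ht3 hb
              refine ⟨Walk.cons hadj q', ?_, ?_, ?_⟩
              · simp [hs, List.filterMap_cons]
              · simp only [Walk.edges_cons, Walk.support_cons, List.filterMap_cons, hed]
                simp [he]
              · simp only [Walk.length_cons]
                omega

theorem forward_dir {V : Type*} [Fintype V] [DecidableEq V] (G : SimpleGraph V)
    {v : V ⊕ G.edgeSet} (c : (subdivide G).Walk v v) (hcyc : c.IsCycle)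
    (hlen : 2 * Fintype.card V ≤ c.length) :
    ∃ (v : V) (c : G.Walk v v), c.IsHamiltonianCycle := by
  -- find an inl vertex on c
  have hex : ∃ u : V, Sum.inl u ∈ c.support := by
    cases c with
    | nil => exact absurd rfl hcyc.ne_nil
    | cons h q =>
        rename_i z
        cases v with
        | inl u => exact ⟨u, Walk.start_mem_support _⟩
        | inr e =>
          cases z with
          | inr f => exact absurd h subdivide_adj_rr
          | inl a =>
            exact ⟨a, by
              rw [Walk.support_cons, List.mem_cons]
              exact Or.inr (Walk.start_mem_support _)⟩
  obtain ⟨u, hu⟩ := hex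
  set c' := c.rotate (Sum.inl u) hu with hc'
  have hcyc' : c'.IsCycle := hcyc.rotate hu
  have hlen' : c'.length = c.length := by
    rw [← Walk.length_edges, ← Walk.length_edges]
    exact (c.rotate_edges (Sum.inl u) hu).perm.length_eq
  obtain ⟨q, hs, hed, hl⟩ := desub c'.length u u (Sum.inl u) c' rfl hcyc'.isTrail rfl
  have hcard : Fintype.card V ≤ q.length := by omega
  have hqtail : q.support.tail = c'.support.tail.filterMap Sum.getLeft? := by
    have h1 : c'.support = Sum.inl u :: c'.support.tail := Walk.support_eq_cons c'
    rw [h1, List.filterMap_cons] at hs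
    simp only [Sum.getLeft?] at hs
    rw [Walk.support_eq_cons q] at hs
    exact (List.cons.injEq .. ▸ hs).2
  have hgetinj : ∀ (a a' : V ⊕ G.edgeSet) (b : V),
      b ∈ Sum.getLeft? a → b ∈ Sum.getLeft? a' → a = a' := by
    rintro (x | x) (y | y) b h1 h2 <;> simp_all
  have htailnodup : q.support.tail.Nodup := by
    rw [hqtail]
    exact List.Nodup.filterMap hgetinj hcyc'.support_nodup
  have hednodup : q.edges.Nodup := by
    rw [hed, Walk.support_eq_cons c', List.filterMap_cons]
    simp only [rightVal_inl]
    refine List.Nodup.filterMap ?_ hcyc'.support_nodup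
    rintro (x | x) (y | y) b h1 h2 <;> simp_all
    exact Subtype.ext (h1.trans h2.symm)
  have hqnenil : q ≠ Walk.nil := by
    intro hq
    have : q.length = 0 := by rw [hq]; rfl
    have hpos : 0 < Fintype.card V := Fintype.card_pos_iff.mpr ⟨u⟩
    omega
  have hqcyc : q.IsCycle := ⟨⟨⟨hednodup⟩, hqnenil⟩, htailnodup⟩
  refine ⟨u, q, ?_⟩
  rw [Walk.isHamiltonianCycle_iff_isCycle_and_support_count_tail_eq_one]
  refine ⟨hqcyc, fun a => ?_⟩
  have hlen_tail : q.support.tail.length = q.length := by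
    have h1 := Walk.length_support q
    rw [Walk.support_eq_cons q, List.length_cons] at h1
    omega
  have huniv : q.support.tail.toFinset = Finset.univ := by
    apply Finset.eq_univ_of_card
    rw [List.toFinset_card_of_nodup htailnodup, hlen_tail]
    have h2 : q.support.tail.toFinset.card ≤ Fintype.card V := by
      exact Finset.card_le_card (Finset.subset_univ _) |>.trans_eq (Finset.card_univ)
    rw [List.toFinset_card_of_nodup htailnodup, hlen_tail] at h2
    omega
  have hmem : a ∈ q.support.tail := by
    rw [← List.mem_toFinset, huniv]
    exact Finset.mem_univ a
  exact List.count_eq_one_of_mem htailnodup hmem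

theorem stmt_2 {V : Type*} [Fintype V] [DecidableEq V] (G : SimpleGraph V) :
    (∃ (v : V ⊕ G.edgeSet) (c : (subdivide G).Walk v v),
        IsInducedCycle (subdivide G) c ∧ 2 * Fintype.card V ≤ c.length) ↔
      ∃ (v : V) (c : G.Walk v v), c.IsHamiltonianCycle := by
  constructor
  · rintro ⟨v, c, ⟨hcyc, -⟩, hlen⟩
    exact forward_dir G c hcyc hlen
  · rintro ⟨v, c, hham⟩
    refine ⟨Sum.inl v, sub c, ⟨sub_isCycle hham.isCycle, sub_induced c⟩, ?_⟩
    rw [sub_length, hham.length_eq]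

end LOH
end

section
/- Let $G$ be a graph with an odd number $n$ of vertices, and let $H$ be obtained from $G$ by subdividing every edge of $G$ exactly twice. Then $H$ has an induced cycle of odd length at least $3n$ if and only if $G$ has a Hamilton cycle. -/
open SimpleGraph

namespace LOH

variable {V : Type*}

/-- The graph obtained from `G` by subdividing every edge exactly twice: each
edge `uv` is replaced by a path `u - w₁ - w₂ - v` of length three, where the new
internal vertices `w₁, w₂` have degree two. The new vertex associated to the
endpoint `u` of the edge `e = uv` is `⟨e, u⟩`. -/
def subdivide2 {V : Type*} (G : SimpleGraph V) :
    SimpleGraph (V ⊕ (Σ e : G.edgeSet, {x : V // x ∈ (e : Sym2 V)})) where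
  Adj x y :=
    match x, y with
    | Sum.inl u, Sum.inr ⟨_, z⟩ => u = z.1
    | Sum.inr ⟨_, z⟩, Sum.inl u => u = z.1
    | Sum.inr ⟨e, z⟩, Sum.inr ⟨f, z'⟩ => e = f ∧ z.1 ≠ z'.1
    | Sum.inl _, Sum.inl _ => False
  symm := by
    constructor
    rintro (u | ⟨e, z⟩) (w | ⟨f, z'⟩) h
    · exact h.elim
    · exact h.symm ▸ rfl
    · exact h ▸ rfl
    · exact ⟨h.1.symm, h.2.symm⟩
  loopless := by
    constructor
    rintro (u | ⟨e, z⟩) h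
    · exact h
    · exact h.2 rfl


section Subdivide2Aux

open SimpleGraph Walk

variable {V : Type*} {G : SimpleGraph V}

private lemma adj_of_mem_edge {e : Sym2 V} (he : e ∈ G.edgeSet) {x y : V}
    (hx : x ∈ e) (hy : y ∈ e) (hxy : x ≠ y) : G.Adj x y := by
  induction e using Sym2.ind with
  | _ a b =>
    rw [Sym2.mem_iff] at hx hy
    rw [SimpleGraph.mem_edgeSet] at he
    rcases hx with rfl | rfl <;> rcases hy with rfl | rfl
    · exact absurd rfl hxy
    · exact he
    · exact he.symm
    · exact absurd rfl hxy

private lemma eq_of_mem_mem {e : Sym2 V} {x y z : V}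
    (hx : x ∈ e) (hy : y ∈ e) (hz : z ∈ e) (hxz : x ≠ z) (hyz : y ≠ z) : x = y := by
  induction e using Sym2.ind with
  | _ a b =>
    rw [Sym2.mem_iff] at hx hy hz
    rcases hx with rfl | rfl <;> rcases hy with rfl | rfl <;> rcases hz with rfl | rfl <;> tauto

private lemma adj_inl_inr (u : V) (e : G.edgeSet) (z : {x : V // x ∈ (e : Sym2 V)})
    (h : u = z.1) : (subdivide2 G).Adj (Sum.inl u) (Sum.inr ⟨e, z⟩) := h

private lemma adj_inr_inl (u : V) (e : G.edgeSet) (z : {x : V // x ∈ (e : Sym2 V)})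
    (h : u = z.1) : (subdivide2 G).Adj (Sum.inr ⟨e, z⟩) (Sum.inl u) := h

private lemma adj_inr_inr (e : G.edgeSet) (z z' : {x : V // x ∈ (e : Sym2 V)})
    (h : z.1 ≠ z'.1) : (subdivide2 G).Adj (Sum.inr ⟨e, z⟩) (Sum.inr ⟨e, z'⟩) := ⟨rfl, h⟩

/-- Lift a walk of `G` to a walk of `subdivide2 G`, tripling each edge. -/
def lift2 : {u v : V} → (p : G.Walk u v) → (subdivide2 G).Walk (Sum.inl u) (Sum.inl v)
  | _, _, Walk.nil => Walk.nil
  | _, _, @Walk.cons _ _ u w _ h p =>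
    Walk.cons (adj_inl_inr u ⟨s(u, w), h⟩ ⟨u, Sym2.mem_mk_left u w⟩ rfl)
      (Walk.cons (adj_inr_inr ⟨s(u, w), h⟩ ⟨u, Sym2.mem_mk_left u w⟩
          ⟨w, Sym2.mem_mk_right u w⟩ h.ne)
        (Walk.cons (adj_inr_inl w ⟨s(u, w), h⟩ ⟨w, Sym2.mem_mk_right u w⟩ rfl) (lift2 p)))

lemma lift2_length {u v : V} (p : G.Walk u v) : (lift2 p).length = 3 * p.length := by
  induction p with
  | nil => simp [lift2]
  | cons h p ih => simp [lift2, Walk.length_cons, ih]; ring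

lemma inl_mem_lift2_support {u v a : V} (p : G.Walk u v) :
    (Sum.inl a : V ⊕ (Σ e : G.edgeSet, {x : V // x ∈ (e : Sym2 V)})) ∈ (lift2 p).support
      ↔ a ∈ p.support := by
  induction p with
  | nil => simp [lift2]
  | cons h p ih => simp [lift2, Walk.support_cons, ih]

lemma inr_mem_lift2_support {u v : V} (p : G.Walk u v) (e : G.edgeSet)
    (z : {x : V // x ∈ (e : Sym2 V)}) :
    (Sum.inr ⟨e, z⟩ : V ⊕ (Σ e : G.edgeSet, {x : V // x ∈ (e : Sym2 V)})) ∈ (lift2 p).support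
      ↔ (e : Sym2 V) ∈ p.edges := by
  induction p with
  | nil => simp [lift2]
  | @cons u w v h p ih =>
    simp only [lift2, Walk.support_cons, List.mem_cons, Walk.edges_cons]
    constructor
    · rintro (hc | hc | hc | hc)
      · exact absurd hc (by simp)
      · have h1 := congrArg Sigma.fst (Sum.inr.inj hc)
        exact Or.inl (congrArg Subtype.val h1)
      · have h1 := congrArg Sigma.fst (Sum.inr.inj hc)
        exact Or.inl (congrArg Subtype.val h1)
      · exact Or.inr (ih.mp hc)
    · rintro (he | he)
      · obtain rfl : e = ⟨s(u, w), h⟩ := Subtype.ext he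
        have hz : z.1 = u ∨ z.1 = w := by have hh := z.2; exact Sym2.mem_iff.mp hh
        rcases hz with h1 | h1
        · obtain rfl : z = ⟨u, Sym2.mem_mk_left u w⟩ := Subtype.ext h1
          exact Or.inr (Or.inl rfl)
        · obtain rfl : z = ⟨w, Sym2.mem_mk_right u w⟩ := Subtype.ext h1
          exact Or.inr (Or.inr (Or.inl rfl))
      · exact Or.inr (Or.inr (Or.inr (ih.mpr he)))

lemma lift2_edge_mem1 {u v : V} (p : G.Walk u v) (e : G.edgeSet)
    (z : {x : V // x ∈ (e : Sym2 V)}) (he : (e : Sym2 V) ∈ p.edges) :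
    s(Sum.inl z.1, Sum.inr ⟨e, z⟩) ∈ (lift2 p).edges := by
  induction p with
  | nil => simp at he
  | @cons u w v h p ih =>
    rw [Walk.edges_cons, List.mem_cons] at he
    simp only [lift2, Walk.edges_cons, List.mem_cons]
    rcases he with he | he
    · obtain rfl : e = ⟨s(u, w), h⟩ := Subtype.ext he
      have hz : z.1 = u ∨ z.1 = w := by have hh := z.2; exact Sym2.mem_iff.mp hh
      rcases hz with h1 | h1
      · obtain rfl : z = ⟨u, Sym2.mem_mk_left u w⟩ := Subtype.ext h1
        exact Or.inl rfl
      · obtain rfl : z = ⟨w, Sym2.mem_mk_right u w⟩ := Subtype.ext h1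
        exact Or.inr (Or.inr (Or.inl Sym2.eq_swap))
    · exact Or.inr (Or.inr (Or.inr (ih he)))

lemma lift2_edge_mem2 {u v : V} (p : G.Walk u v) (e : G.edgeSet)
    (z z' : {x : V // x ∈ (e : Sym2 V)}) (hzz' : z.1 ≠ z'.1)
    (he : (e : Sym2 V) ∈ p.edges) :
    s(Sum.inr ⟨e, z⟩, Sum.inr ⟨e, z'⟩) ∈ (lift2 p).edges := by
  induction p with
  | nil => simp at he
  | @cons u w v h p ih =>
    rw [Walk.edges_cons, List.mem_cons] at he
    simp only [lift2, Walk.edges_cons, List.mem_cons]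
    rcases he with he | he
    · obtain rfl : e = ⟨s(u, w), h⟩ := Subtype.ext he
      have hz : z.1 = u ∨ z.1 = w := by have hh := z.2; exact Sym2.mem_iff.mp hh
      have hz' : z'.1 = u ∨ z'.1 = w := by have hh := z'.2; exact Sym2.mem_iff.mp hh
      rcases hz with h1 | h1
      · obtain rfl : z = ⟨u, Sym2.mem_mk_left u w⟩ := Subtype.ext h1
        have h2 : z'.1 = w := by
          rcases hz' with h2 | h2
          · exact absurd (h1.trans h2.symm) hzz'
          · exact h2
        obtain rfl : z' = ⟨w, Sym2.mem_mk_right u w⟩ := Subtype.ext h2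
        exact Or.inr (Or.inl rfl)
      · obtain rfl : z = ⟨w, Sym2.mem_mk_right u w⟩ := Subtype.ext h1
        have h2 : z'.1 = u := by
          rcases hz' with h2 | h2
          · exact h2
          · exact absurd (h1.trans h2.symm) hzz'
        obtain rfl : z' = ⟨u, Sym2.mem_mk_left u w⟩ := Subtype.ext h2
        exact Or.inr (Or.inl Sym2.eq_swap)
    · exact Or.inr (Or.inr (Or.inr (ih he)))

lemma lift2_isTrail {u v : V} {p : G.Walk u v} (hp : p.IsTrail) : (lift2 p).IsTrail := by
  induction p with
  | nil => simp [lift2]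
  | @cons u w v h p ih =>
    rw [Walk.isTrail_cons] at hp
    obtain ⟨hp, hew⟩ := hp
    have hzu : (Sum.inr ⟨⟨s(u, w), h⟩, ⟨u, Sym2.mem_mk_left u w⟩⟩ :
        V ⊕ (Σ e : G.edgeSet, {x : V // x ∈ (e : Sym2 V)})) ∉ (lift2 p).support := by
      rw [inr_mem_lift2_support]; exact hew
    have hzw : (Sum.inr ⟨⟨s(u, w), h⟩, ⟨w, Sym2.mem_mk_right u w⟩⟩ :
        V ⊕ (Σ e : G.edgeSet, {x : V // x ∈ (e : Sym2 V)})) ∉ (lift2 p).support := by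
      rw [inr_mem_lift2_support]; exact hew
    simp only [lift2]
    rw [Walk.isTrail_cons, Walk.isTrail_cons, Walk.isTrail_cons]
    refine ⟨⟨⟨ih hp, ?_⟩, ?_⟩, ?_⟩
    · intro hmem
      exact hzw (Walk.fst_mem_support_of_mem_edges _ hmem)
    · rw [Walk.edges_cons, List.mem_cons]
      rintro (hc | hc)
      · simp [Sym2.eq_iff, h.ne] at hc
      · exact hzu (Walk.fst_mem_support_of_mem_edges _ hc)
    · rw [Walk.edges_cons, List.mem_cons, Walk.edges_cons, List.mem_cons]
      rintro (hc | hc | hc)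
      · simp [Sym2.eq_iff, h.ne] at hc
      · simp [Sym2.eq_iff, h.ne] at hc
      · exact hzu (Walk.snd_mem_support_of_mem_edges _ hc)

lemma lift2_support_nodup {u v : V} {p : G.Walk u v} (hp : p.support.Nodup) :
    (lift2 p).support.Nodup := by
  induction p with
  | nil => simp [lift2]
  | @cons u w v h p ih =>
    rw [Walk.support_cons, List.nodup_cons] at hp
    obtain ⟨hu, hnd⟩ := hp
    have hne : u ≠ w := fun e => hu (e ▸ p.start_mem_support)
    have hew : s(u, w) ∉ p.edges := fun hmem => hu (p.fst_mem_support_of_mem_edges hmem)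
    simp only [lift2, Walk.support_cons, List.nodup_cons]
    refine ⟨?_, ?_, ?_, ih hnd⟩
    · simp [List.mem_cons, inl_mem_lift2_support, hu]
    · simp [List.mem_cons, inr_mem_lift2_support, hew, hne]
    · simp [inr_mem_lift2_support, hew]

/-- Project a path of the subdivision between two original vertices down to `G`. -/
lemma proj_aux (n : ℕ) : ∀ {u v : V} (p : (subdivide2 G).Walk (Sum.inl u) (Sum.inl v)),
    p.length = n → p.IsPath →
    ∃ q : G.Walk u v, q.IsPath ∧ 3 * q.length = p.length ∧
      ∀ w ∈ q.support,
        (Sum.inl w : V ⊕ (Σ e : G.edgeSet, {x : V // x ∈ (e : Sym2 V)})) ∈ p.support := by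
  induction n using Nat.strong_induction_on with
  | _ n ih =>
    intro u v p hlen hp
    cases p with
    | nil => exact ⟨Walk.nil, Walk.IsPath.nil, by simp, by simp⟩
    | @cons _ y _ h₁ p₁ =>
      rcases y with a | ⟨e, z⟩
      · exact h₁.elim
      · have hz : u = z.1 := h₁
        cases p₁ with
        | @cons _ y₂ _ h₂ p₂ =>
          rcases y₂ with b | ⟨f, z'⟩
          · -- step back to an original vertex: contradiction with path
            exfalso
            have hb : b = z.1 := h₂
            have hub : u = b := hz.trans hb.symm
            have hsup := hp.support_nodup
            simp only [Walk.support_cons, List.nodup_cons] at hsup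
            exact hsup.1 (List.mem_cons_of_mem _ (hub ▸ p₂.start_mem_support))
          · have h₂' : e = f ∧ z.1 ≠ z'.1 := h₂
            obtain ⟨rfl, hzz'⟩ := h₂'
            cases p₂ with
            | @cons _ y₃ _ h₃ p₃ =>
              rcases y₃ with b | ⟨g, z₃⟩
              · have hb : b = z'.1 := h₃
                subst hb
                have hp₃ : p₃.IsPath := hp.of_cons.of_cons.of_cons
                have hlen' : p₃.length + 3 = n := by
                  simp only [Walk.length_cons] at hlen; omega
                obtain ⟨q₃, hq₃path, hq₃len, hq₃sup⟩ :=
                  ih p₃.length (by omega) p₃ rfl hp₃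
                have hadj : G.Adj u z'.1 :=
                  adj_of_mem_edge e.2 (hz ▸ z.2) z'.2 (by rw [hz]; exact hzz')
                refine ⟨Walk.cons hadj q₃, ?_, ?_, ?_⟩
                · rw [Walk.cons_isPath_iff]
                  refine ⟨hq₃path, fun hmem => ?_⟩
                  have hmem' := hq₃sup u hmem
                  have hsup := hp.support_nodup
                  simp only [Walk.support_cons, List.nodup_cons] at hsup
                  exact hsup.1
                    (List.mem_cons_of_mem _ (List.mem_cons_of_mem _ hmem'))
                · simp only [Walk.length_cons]
                  omega
                · intro w hw
                  rw [Walk.support_cons, List.mem_cons] at hw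
                  rcases hw with rfl | hw
                  · exact Walk.start_mem_support _
                  · have := hq₃sup w hw
                    simp only [Walk.support_cons, List.mem_cons]
                    tauto
              · -- third new vertex would revisit the first one
                exfalso
                have h₃' : e = g ∧ z'.1 ≠ z₃.1 := h₃
                obtain ⟨rfl, h23⟩ := h₃'
                have h3z : z₃.1 = z.1 := eq_of_mem_mem z₃.2 z.2 z'.2 h23.symm hzz'
                obtain rfl : z₃ = z := Subtype.ext h3z
                have hsup := hp.support_nodup
                simp only [Walk.support_cons, List.nodup_cons] at hsup
                exact hsup.2.1 (List.mem_cons_of_mem _ p₃.start_mem_support)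

lemma exists_inl_mem {v : V ⊕ (Σ e : G.edgeSet, {x : V // x ∈ (e : Sym2 V)})}
    {c : (subdivide2 G).Walk v v} (hc : c.IsCycle) :
    ∃ a : V, (Sum.inl a : V ⊕ (Σ e : G.edgeSet, {x : V // x ∈ (e : Sym2 V)})) ∈ c.support := by
  rcases v with a | ⟨e, z⟩
  · exact ⟨a, c.start_mem_support⟩
  · cases c with
    | nil => exact absurd rfl hc.ne_nil
    | @cons _ y _ h₁ t =>
      rcases y with a | ⟨f, z'⟩
      · exact ⟨a, by simp [Walk.support_cons]⟩
      · have h₁' : e = f ∧ z.1 ≠ z'.1 := h₁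
        obtain ⟨rfl, hzz'⟩ := h₁'
        cases t with
        | nil => exact (hzz' rfl).elim
        | @cons _ y₂ _ h₂ t₂ =>
          rcases y₂ with a | ⟨g, z₃⟩
          · exact ⟨a, by simp [Walk.support_cons]⟩
          · exfalso
            have h₂' : e = g ∧ z'.1 ≠ z₃.1 := h₂
            obtain ⟨rfl, h23⟩ := h₂'
            have h3z : z₃.1 = z.1 := eq_of_mem_mem z₃.2 z.2 z'.2 h23.symm hzz'
            obtain rfl : z₃ = z := Subtype.ext h3z
            have hsup := hc.support_nodup
            cases t₂ with
            | nil =>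
              have h3 := hc.three_le_length
              simp [Walk.length_cons] at h3
            | @cons _ y₃ _ h₃ t₃ =>
              simp only [Walk.support_cons, List.tail_cons, List.nodup_cons] at hsup
              exact hsup.2.1 t₃.end_mem_support

lemma cycle_to_ham [Fintype V] [DecidableEq V] (hodd : Odd (Fintype.card V)) {a : V}
    (c : (subdivide2 G).Walk (Sum.inl a) (Sum.inl a)) (hc : c.IsCycle)
    (hlen : 3 * Fintype.card V ≤ c.length) :
    ∃ (v : V) (d : G.Walk v v), d.IsHamiltonianCycle := by
  cases c with
  | nil => exact absurd rfl hc.ne_nil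
  | @cons _ y _ h₁ r₁ =>
    rcases y with b | ⟨e, z⟩
    · exact h₁.elim
    · have hz : a = z.1 := h₁
      cases r₁ with
      | @cons _ y₂ _ h₂ r₂ =>
        rcases y₂ with b | ⟨f, z'⟩
        · -- immediately back to an original vertex
          exfalso
          have hb : b = z.1 := h₂
          have hab : b = a := hb.trans hz.symm
          subst hab
          have hsup := hc.support_nodup
          cases r₂ with
          | nil =>
            have h3 := hc.three_le_length
            simp [Walk.length_cons] at h3
          | @cons _ y₃ _ h₃ r₃ =>
            simp only [Walk.support_cons, List.tail_cons, List.nodup_cons] at hsup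
            exact hsup.2.1 r₃.end_mem_support
        · have h₂' : e = f ∧ z.1 ≠ z'.1 := h₂
          obtain ⟨rfl, hzz'⟩ := h₂'
          cases r₂ with
          | @cons _ y₃ _ h₃ r₃ =>
            rcases y₃ with b | ⟨g, z₃⟩
            · have hb : b = z'.1 := h₃
              subst hb
              -- r₃ is a path
              have htr := hc.edges_nodup
              simp only [Walk.edges_cons, List.nodup_cons] at htr
              have hsup := hc.support_nodup
              simp only [Walk.support_cons, List.tail_cons, List.nodup_cons] at hsup
              have hp₃ : r₃.IsPath := ⟨⟨htr.2.2.2⟩, hsup.2.2⟩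
              obtain ⟨q, hqpath, hqlen, hqsup⟩ := proj_aux r₃.length r₃ rfl hp₃
              have hadj : G.Adj a z'.1 :=
                adj_of_mem_edge e.2 (hz ▸ z.2) z'.2 (by rw [hz]; exact hzz')
              -- length bookkeeping
              simp only [Walk.length_cons] at hlen
              have hqlt : q.length < Fintype.card V := hqpath.length_lt
              have hqeq : q.length + 1 = Fintype.card V := by omega
              -- the closing edge is not an edge of `q`
              have hnot : s(a, z'.1) ∉ q.edges := by
                intro hmem
                cases q with
                | nil => simp at hmem
                | @cons _ y₄ _ h₄ q' =>
                  rw [Walk.edges_cons, List.mem_cons] at hmem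
                  have hq' := (Walk.cons_isPath_iff h₄ q').mp hqpath
                  rcases hmem with hsy | hmem
                  · rw [Sym2.eq_iff] at hsy
                    rcases hsy with ⟨h5, h6⟩ | ⟨h5, h6⟩
                    · exact hadj.ne h5
                    · subst h5
                      cases q' with
                      | nil =>
                        obtain ⟨k, hk⟩ := hodd
                        simp only [Walk.length_cons, Walk.length_nil] at hqeq
                        omega
                      | @cons _ y₅ _ h₅ q'' =>
                        have hs := hq'.1.support_nodup
                        simp only [Walk.support_cons, List.nodup_cons] at hs
                        exact hs.1 q''.end_mem_support
                  · exact hq'.2 (Walk.snd_mem_support_of_mem_edges q' hmem)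
              have hCcycle : (Walk.cons hadj q).IsCycle :=
                (Walk.cons_isCycle_iff q hadj).mpr ⟨hqpath, hnot⟩
              refine ⟨a, Walk.cons hadj q, ?_⟩
              rw [Walk.isHamiltonianCycle_iff_isCycle_and_support_count_tail_eq_one]
              refine ⟨hCcycle, fun b => ?_⟩
              have hsupfin : q.support.toFinset = Finset.univ := by
                apply Finset.eq_univ_of_card
                rw [List.toFinset_card_of_nodup hqpath.support_nodup, Walk.length_support]
                omega
              have hbmem : b ∈ q.support := by
                have hb : b ∈ q.support.toFinset := by rw [hsupfin]; exact Finset.mem_univ b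
                simpa using hb
              simp only [Walk.support_cons, List.tail_cons]
              exact List.count_eq_one_of_mem hqpath.support_nodup hbmem
            · exfalso
              have h₃' : e = g ∧ z'.1 ≠ z₃.1 := h₃
              obtain ⟨rfl, h23⟩ := h₃'
              have h3z : z₃.1 = z.1 := eq_of_mem_mem z₃.2 z.2 z'.2 h23.symm hzz'
              obtain rfl : z₃ = z := Subtype.ext h3z
              have hsup := hc.support_nodup
              simp only [Walk.support_cons, List.tail_cons, List.nodup_cons] at hsup
              exact hsup.1 (List.mem_cons_of_mem _ r₃.start_mem_support)

end Subdivide2Aux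

theorem stmt_3 {V : Type*} [Fintype V] [DecidableEq V] (G : SimpleGraph V)
    (hodd : Odd (Fintype.card V)) :
    (∃ (v : V ⊕ (Σ e : G.edgeSet, {x : V // x ∈ (e : Sym2 V)}))
        (c : (subdivide2 G).Walk v v),
        IsInducedCycle (subdivide2 G) c ∧ Odd c.length ∧
          3 * Fintype.card V ≤ c.length) ↔
      ∃ (v : V) (c : G.Walk v v), c.IsHamiltonianCycle := by
  constructor
  · rintro ⟨v, c, hic, -, hlen⟩
    obtain ⟨a, ha⟩ := exists_inl_mem hic.1
    have hrot := hic.1.rotate ha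
    have hlenrot : (c.rotate _ ha).length = c.length := by
      have hperm := (c.rotate_darts _ ha).perm.length_eq
      rwa [Walk.length_darts, Walk.length_darts] at hperm
    exact cycle_to_ham hodd (c.rotate _ ha) hrot (hlenrot ▸ hlen)
  · rintro ⟨v, c, hc⟩
    have hlenc := hc.length_eq
    cases c with
    | nil => exact absurd rfl hc.isCycle.ne_nil
    | @cons _ w _ h q =>
      obtain ⟨hq, hew⟩ := (Walk.cons_isCycle_iff q h).mp hc.isCycle
      refine ⟨Sum.inl v, lift2 (Walk.cons h q), ⟨?_, ?_⟩, ?_, ?_⟩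
      · rw [Walk.isCycle_def]
        refine ⟨lift2_isTrail hc.isCycle.isCircuit.isTrail, ?_, ?_⟩
        · intro hnil
          have hl := lift2_length (G := G) (Walk.cons h q)
          rw [hnil] at hl
          simp only [Walk.length_nil, Walk.length_cons] at hl
          omega
        · have hvw : v ≠ w := h.ne
          simp only [lift2, Walk.support_cons, List.tail_cons, List.nodup_cons]
          refine ⟨?_, ?_, lift2_support_nodup hq.support_nodup⟩
          · simp [List.mem_cons, inr_mem_lift2_support, hew,
              hvw]
          · simp [inr_mem_lift2_support, hew]
      · rintro (x | ⟨e, zx⟩) (y | ⟨f, zy⟩) hx hy hadj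
        · exact hadj.elim
        · have hxz : x = zy.1 := hadj
          subst hxz
          exact lift2_edge_mem1 _ f zy ((inr_mem_lift2_support _ f zy).mp hy)
        · have hyz : y = zx.1 := hadj
          subst hyz
          rw [Sym2.eq_swap]
          exact lift2_edge_mem1 _ e zx ((inr_mem_lift2_support _ e zx).mp hx)
        · obtain ⟨rfl, hne⟩ : e = f ∧ zx.1 ≠ zy.1 := hadj
          exact lift2_edge_mem2 _ e zx zy hne ((inr_mem_lift2_support _ e zx).mp hx)
      · rw [lift2_length, hlenc]
        exact Odd.mul (⟨1, by norm_num⟩ : Odd 3) hodd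
      · rw [lift2_length, hlenc]

end LOH
end

section
/- Let $\ell\ge 5$, let $G$ be a candidate, let $C$ be a shortest long odd hole in $G$, and let $(x,D)$ be a remote base with $D$ having ends $d_1,d_2$. Let $D'$ be the subpath of $C$ with ends $d_1,d_2$ other than $D$. Then $D'$ has odd length at least $\ell+3$, and $x$ has a neighbour in $V(C)$ that is distinct from and nonadjacent to both $d_1$ and $d_2$. -/
open SimpleGraph

namespace LOH

variable {V : Type*}

section Aux

variable {G : SimpleGraph V}

open SimpleGraph.Walk


open SimpleGraph.Walk

/-- Take the first `i` edges of a walk. -/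
def takeW {u v : V} : (p : G.Walk u v) → (i : ℕ) → G.Walk u (p.getVert i)
  | Walk.nil, _ => Walk.nil
  | Walk.cons _ _, 0 => Walk.nil
  | Walk.cons h q, (i+1) => Walk.cons h (takeW q i)

/-- Drop the first `i` edges of a walk. -/
def dropW {u v : V} : (p : G.Walk u v) → (i : ℕ) → G.Walk (p.getVert i) v
  | Walk.nil, _ => Walk.nil
  | Walk.cons h q, 0 => Walk.cons h q
  | Walk.cons _ q, (i+1) => dropW q i

lemma length_takeW {u v : V} : ∀ (p : G.Walk u v) (i : ℕ), i ≤ p.length →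
    (takeW p i).length = i
  | Walk.nil, 0, _ => rfl
  | Walk.cons _ _, 0, _ => rfl
  | Walk.cons h q, (i+1), hi => by
      simpa [takeW] using length_takeW q i (by simpa using hi)

lemma length_dropW {u v : V} : ∀ (p : G.Walk u v) (i : ℕ), i ≤ p.length →
    (dropW p i).length = p.length - i
  | Walk.nil, 0, _ => rfl
  | Walk.cons _ _, 0, _ => rfl
  | Walk.cons h q, (i+1), hi => by
      simpa [dropW] using length_dropW q i (by simpa using hi)

lemma support_takeW {u v : V} : ∀ (p : G.Walk u v) (i : ℕ),
    (takeW p i).support = p.support.take (i+1)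
  | Walk.nil, i => by simp [takeW]
  | Walk.cons _ _, 0 => by simp [takeW]; rfl
  | Walk.cons h q, (i+1) => by
      simp [takeW, support_takeW q i]

lemma support_dropW {u v : V} : ∀ (p : G.Walk u v) (i : ℕ), i ≤ p.length →
    (dropW p i).support = p.support.drop i
  | Walk.nil, 0, _ => rfl
  | Walk.cons _ _, 0, _ => rfl
  | Walk.cons h q, (i+1), hi => by
      simpa [dropW] using support_dropW q i (by simpa using hi)

lemma edges_takeW {u v : V} : ∀ (p : G.Walk u v) (i : ℕ),
    (takeW p i).edges = p.edges.take i
  | Walk.nil, i => by simp [takeW]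
  | Walk.cons _ _, 0 => by simp [takeW]; rfl
  | Walk.cons h q, (i+1) => by simp [takeW, edges_takeW q i]

lemma getVert_takeW {u v : V} : ∀ (p : G.Walk u v) (i j : ℕ), j ≤ i →
    (takeW p i).getVert j = p.getVert j
  | Walk.nil, i, j, _ => by simp [takeW]
  | Walk.cons _ _, 0, 0, _ => rfl
  | Walk.cons _ _, 0, (j+1), hj => absurd hj (by omega)
  | Walk.cons h q, (i+1), 0, _ => rfl
  | Walk.cons h q, (i+1), (j+1), hj => by
      simpa [takeW] using getVert_takeW q i j (by omega)

lemma getVert_dropW {u v : V} : ∀ (p : G.Walk u v) (i j : ℕ),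
    (dropW p i).getVert j = p.getVert (i + j)
  | Walk.nil, i, j => rfl
  | Walk.cons _ _, 0, j => by simp [dropW]; rfl
  | Walk.cons h q, (i+1), j => by
      have := getVert_dropW q i j
      rw [show i + 1 + j = (i + j) + 1 by omega]; exact this.trans (Walk.getVert_cons_succ ..).symm

lemma isPath_takeW {u v : V} (p : G.Walk u v) (i : ℕ) (hp : p.IsPath) :
    (takeW p i).IsPath := by
  rw [Walk.isPath_def] at hp ⊢
  rw [support_takeW]
  exact hp.sublist (List.take_sublist _ _)

lemma isPath_dropW {u v : V} (p : G.Walk u v) (i : ℕ) (hi : i ≤ p.length) (hp : p.IsPath) :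
    (dropW p i).IsPath := by
  rw [Walk.isPath_def] at hp ⊢
  rw [support_dropW p i hi]
  exact hp.sublist (List.drop_sublist _ _)

lemma getVert_mem_support {u v : V} (p : G.Walk u v) {k : ℕ} (hk : k ≤ p.length) :
    p.getVert k ∈ p.support :=
  Walk.mem_support_iff_exists_getVert.mpr ⟨k, rfl, hk⟩

lemma getVert_injective {u v : V} {p : G.Walk u v} (hp : p.IsPath) :
    ∀ {i j : ℕ}, i ≤ p.length → j ≤ p.length → p.getVert i = p.getVert j → i = j := by
  induction p with
  | nil => intro i j hi hj _; simp only [Walk.length_nil] at hi hj; omega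
  | cons h q ih =>
    intro i j hi hj hij
    match i, j with
    | 0, 0 => rfl
    | 0, (j+1) =>
      exfalso
      apply ((Walk.cons_isPath_iff h q).mp hp).2
      have : q.getVert j = _ := hij.symm
      rw [Walk.getVert_zero] at this
      exact Walk.mem_support_iff_exists_getVert.mpr ⟨j, this, by simpa using hj⟩
    | (i+1), 0 =>
      exfalso
      apply ((Walk.cons_isPath_iff h q).mp hp).2
      have : q.getVert i = _ := hij
      rw [Walk.getVert_zero] at this
      exact Walk.mem_support_iff_exists_getVert.mpr ⟨i, this, by simpa using hi⟩
    | (i+1), (j+1) =>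
      have := ih ((Walk.cons_isPath_iff h q).mp hp).1 (by simpa using hi) (by simpa using hj)
        (by simpa [Walk.getVert_cons_succ] using hij)
      omega

lemma mem_edges_iff_exists {u v : V} {p : G.Walk u v} {e : Sym2 V} :
    e ∈ p.edges ↔ ∃ k, k < p.length ∧ e = s(p.getVert k, p.getVert (k+1)) := by
  induction p with
  | nil => simp
  | cons h q ih =>
    simp only [Walk.edges_cons, List.mem_cons, ih, Walk.length_cons]
    constructor
    · rintro (rfl | ⟨k, hk, rfl⟩)
      · exact ⟨0, by omega, by simp [Walk.getVert_zero, Walk.getVert_cons_succ]⟩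
      · exact ⟨k+1, by omega, by simp [Walk.getVert_cons_succ]⟩
    · rintro ⟨k, hk, rfl⟩
      match k with
      | 0 => left; simp [Walk.getVert_zero, Walk.getVert_cons_succ]
      | (k+1) => right; exact ⟨k, by omega, by simp [Walk.getVert_cons_succ]⟩

lemma edge_start {u v y : V} {p : G.Walk u v} (hp : p.IsPath) (h : s(u, y) ∈ p.edges) :
    y = p.getVert 1 := by
  obtain ⟨k, hk, he⟩ := mem_edges_iff_exists.mp h
  rw [Sym2.eq_iff] at he
  rcases he with ⟨h1, h2⟩ | ⟨h1, h2⟩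
  · have hk0 : (0:ℕ) = k := getVert_injective hp (by omega) (by omega)
      (by rw [Walk.getVert_zero]; exact h1)
    rw [h2, ← hk0]
  · exfalso
    have : (0:ℕ) = k + 1 := getVert_injective hp (by omega) (by omega)
      (by rw [Walk.getVert_zero]; exact h1)
    omega

lemma edge_end {u v y : V} {p : G.Walk u v} (hp : p.IsPath) (h : s(y, v) ∈ p.edges) :
    y = p.getVert (p.length - 1) := by
  obtain ⟨k, hk, he⟩ := mem_edges_iff_exists.mp h
  rw [Sym2.eq_iff] at he
  rcases he with ⟨h1, h2⟩ | ⟨h1, h2⟩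
  · have hkk : p.length = k + 1 := getVert_injective hp (by omega) (by omega)
      (by rw [Walk.getVert_length]; exact h2)
    rw [h1]; congr 1; omega
  · exfalso
    have : p.length = k := getVert_injective hp (by omega) (by omega)
      (by rw [Walk.getVert_length]; exact h2)
    omega

lemma isPath_loop_length_zero {u : V} {p : G.Walk u u} (hp : p.IsPath) : p.length = 0 := by
  cases p with
  | nil => rfl
  | cons h q =>
    exfalso
    exact ((Walk.cons_isPath_iff h q).mp hp).2 q.end_mem_support


lemma hole_aux {x a b : V} (W : G.Walk a b) (hW : W.IsPath)
    (hWind : ∀ y z, y ∈ W.support → z ∈ W.support → G.Adj y z → s(y,z) ∈ W.edges)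
    (hxa : G.Adj x a) (hxb : G.Adj x b) (hab : a ≠ b) (hxW : x ∉ W.support)
    (hint : ∀ y ∈ W.support, y ≠ a → y ≠ b → ¬ G.Adj x y) :
    ∃ (h : G.Walk x x), IsInducedCycle G h ∧ h.length = W.length + 2 := by
  set H : G.Walk x x := Walk.cons hxa (W.append (Walk.cons hxb.symm Walk.nil)) with hH
  have hsup : H.support = x :: (W.support ++ [x]) := by
    simp [hH, Walk.support_append]
  have hedg : H.edges = s(x,a) :: (W.edges ++ [s(b,x)]) := by
    simp [hH, Walk.edges_append]
  have hmem : ∀ y, y ∈ H.support → y = x ∨ y ∈ W.support := by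
    intro y hy
    rw [hsup] at hy
    simp only [List.mem_cons, List.mem_append, List.mem_singleton] at hy
    tauto
  refine ⟨H, ⟨⟨⟨⟨?_⟩, by simp [hH]⟩, ?_⟩, ?_⟩, ?_⟩
  · -- edges nodup
    rw [hedg]
    refine List.nodup_cons.mpr ⟨?_, ?_⟩
    · intro hm
      rcases List.mem_append.mp hm with hm | hm
      · exact hxW (Walk.fst_mem_support_of_mem_edges W hm)
      · rw [List.mem_singleton, Sym2.eq_iff] at hm
        rcases hm with ⟨h1, h2⟩ | ⟨h1, h2⟩
        · exact hxb.ne h1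
        · exact hab h2
    · refine List.Nodup.append hW.edges_nodup (List.nodup_singleton _) ?_
      intro e he hm
      rw [List.mem_singleton] at hm
      subst hm
      exact hxW (Walk.snd_mem_support_of_mem_edges W he)
  · -- support tail nodup
    rw [hsup]
    simp only [List.tail_cons]
    refine List.Nodup.append hW.support_nodup (List.nodup_singleton _) ?_
    intro y hy hm
    rw [List.mem_singleton] at hm
    subst hm
    exact hxW hy
  · -- induced
    intro y z hy hz hadj
    rcases hmem y hy with rfl | hyW
    · rcases hmem z hz with rfl | hzW
      · exact (hadj.ne rfl).elim
      · by_cases hza : z = a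
        · subst hza; rw [hedg]; simp
        · by_cases hzb : z = b
          · subst hzb
            rw [hedg, Sym2.eq_swap]
            simp
          · exact (hint z hzW hza hzb hadj).elim
    · rcases hmem z hz with rfl | hzW
      · by_cases hya : y = a
        · subst hya; rw [hedg, Sym2.eq_swap]; simp
        · by_cases hyb : y = b
          · subst hyb; rw [hedg]; simp
          · exact (hint y hyW hya hyb hadj.symm).elim
      · have := hWind y z hyW hzW hadj
        rw [hedg]
        simp only [List.mem_cons, List.mem_append]
        tauto
  · simp [hH]

lemma window_ind {u v : V} {A : G.Walk u v} (hA : A.IsPath)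
    (hAind : ∀ y z, y ∈ A.support → z ∈ A.support → G.Adj y z → s(y,z) ∈ A.edges)
    (i j : ℕ) (hij : i ≤ j) (hjle : j ≤ A.length) :
    ∀ y z, y ∈ (takeW (dropW A i) (j-i)).support → z ∈ (takeW (dropW A i) (j-i)).support →
      G.Adj y z → s(y,z) ∈ (takeW (dropW A i) (j-i)).edges := by
  set W := takeW (dropW A i) (j-i) with hWdef
  have hdlen : (dropW A i).length = A.length - i := length_dropW A i (le_trans hij hjle)
  have hWlen : W.length = j - i := by
    rw [hWdef, length_takeW _ _ (by omega)]
  have hWget : ∀ k, k ≤ j - i → W.getVert k = A.getVert (i+k) := by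
    intro k hk
    rw [hWdef, getVert_takeW _ _ _ hk, getVert_dropW]
  intro y z hy hz hadj
  obtain ⟨k1, hk1, hk1le⟩ := Walk.mem_support_iff_exists_getVert.mp hy
  obtain ⟨k2, hk2, hk2le⟩ := Walk.mem_support_iff_exists_getVert.mp hz
  rw [hWlen] at hk1le hk2le
  rw [hWget k1 hk1le] at hk1
  rw [hWget k2 hk2le] at hk2
  have hyA : y ∈ A.support := hk1 ▸ getVert_mem_support A (by omega)
  have hzA : z ∈ A.support := hk2 ▸ getVert_mem_support A (by omega)
  obtain ⟨m, hm, he⟩ := mem_edges_iff_exists.mp (hAind y z hyA hzA hadj)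
  rw [Sym2.eq_iff] at he
  rcases he with ⟨h1, h2⟩ | ⟨h1, h2⟩
  · have e1 : i + k1 = m := getVert_injective hA (by omega) (by omega) (by rw [hk1, h1])
    have e2 : i + k2 = m + 1 := getVert_injective hA (by omega) (by omega) (by rw [hk2, h2])
    have hkk : k1 + 1 ≤ j - i := by omega
    refine mem_edges_iff_exists.mpr ⟨k1, by omega, ?_⟩
    have g1 : W.getVert k1 = y := by rw [hWget k1 hk1le]; exact hk1
    have g2 : W.getVert (k1+1) = z := by
      rw [hWget (k1+1) hkk, show i+(k1+1) = m+1 by omega]; exact h2.symm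
    rw [g1, g2]
  · have e1 : i + k1 = m + 1 := getVert_injective hA (by omega) (by omega) (by rw [hk1, h1])
    have e2 : i + k2 = m := getVert_injective hA (by omega) (by omega) (by rw [hk2, h2])
    have hkk : k2 + 1 ≤ j - i := by omega
    refine mem_edges_iff_exists.mpr ⟨k2, by omega, ?_⟩
    have g1 : W.getVert k2 = z := by rw [hWget k2 hk2le]; exact hk2
    have g2 : W.getVert (k2+1) = y := by
      rw [hWget (k2+1) hkk, show i+(k2+1) = m+1 by omega]; exact h1.symm
    rw [g1, g2]
    exact Sym2.eq_swap

lemma support_takeW_subset {u v : V} (p : G.Walk u v) (i : ℕ) :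
    (takeW p i).support ⊆ p.support := by
  rw [support_takeW]; exact List.take_subset _ _



lemma mem_takeW_support {u v : V} {p : G.Walk u v} {i : ℕ} (hi : i ≤ p.length) {y : V}
    (hy : y ∈ (takeW p i).support) : ∃ k, k ≤ i ∧ y = p.getVert k := by
  obtain ⟨k, hk, hkle⟩ := Walk.mem_support_iff_exists_getVert.mp hy
  rw [length_takeW p i hi] at hkle
  exact ⟨k, hkle, by rw [← getVert_takeW p i k hkle, hk]⟩

lemma chord_jewel {x d1 d2 : V} {ℓ : ℕ} (hl : 5 ≤ ℓ)
    (A B : G.Walk d1 d2) (hA : A.IsPath) (hB : B.IsPath)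
    (hM : 2*ℓ ≤ B.length)
    (hxA : x ∉ A.support) (hxB : x ∉ B.support)
    (hx1 : G.Adj x d1) (hx2 : G.Adj x d2)
    (hinter : ∀ y, y ∈ A.support → y ∈ B.support → y = d1 ∨ y = d2)
    (hintB : ∀ y ∈ B.support, y ≠ d1 → y ≠ d2 → ¬ G.Adj x y)
    (hcross : ∀ y z, y ∈ A.support → z ∈ B.support → y ≠ d1 → y ≠ d2 → z ≠ d1 → z ≠ d2 →
      ¬ G.Adj y z)
    (hBind : ∀ y z, y ∈ B.support → z ∈ B.support → G.Adj y z → s(y,z) ∈ B.edges)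
    (hjewel : ¬ HasLongJewelOfOrderLE G ℓ (ℓ+2))
    (p : ℕ) (hp1 : 1 ≤ p) (hp2 : p + 2 ≤ ℓ) (hpodd : Odd p) (hpL : p < A.length)
    (hadj : G.Adj x (A.getVert p)) : False := by
  have hM10 : 10 ≤ B.length := by omega
  have hd2B : d2 ∈ B.support := Walk.end_mem_support B
  have hd1B : d1 ∈ B.support := Walk.start_mem_support B
  have hzd2' : G.Adj (B.getVert (B.length - 1)) (B.getVert (B.length - 1 + 1)) :=
    B.adj_getVert_succ (by omega)
  rw [show B.length - 1 + 1 = B.length by omega, Walk.getVert_length] at hzd2'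
  have hzB : B.getVert (B.length - 1) ∈ B.support := getVert_mem_support B (by omega)
  have hzd1 : B.getVert (B.length - 1) ≠ d1 := by
    intro h
    have h0 : B.getVert (B.length - 1) = B.getVert 0 := by rw [h, Walk.getVert_zero]
    have := getVert_injective hB (by omega) (by omega) h0
    omega
  have hzd2ne : B.getVert (B.length - 1) ≠ d2 := by
    intro h
    have h0 : B.getVert (B.length - 1) = B.getVert B.length := by
      rw [h, Walk.getVert_length]
    have := getVert_injective hB (by omega) (by omega) h0
    omega
  have hd12 : d1 ≠ d2 := by
    intro h
    have h0 : A.getVert 0 = A.getVert A.length := by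
      rw [Walk.getVert_zero, Walk.getVert_length]; exact h
    have := getVert_injective hA (by omega) (by omega) h0
    omega
  have hxd1 : x ≠ d1 := hx1.ne
  have hxd2 : x ≠ d2 := hx2.ne
  have hxz : x ≠ B.getVert (B.length - 1) := fun h => hxB (h ▸ hzB)
  -- the three walks
  set z := B.getVert (B.length - 1) with hz
  set P : G.Walk d1 z := takeW B (B.length - 1) with hP
  set Q2 : G.Walk d1 z :=
    Walk.cons hx1.symm (Walk.cons hx2 (Walk.cons hzd2'.symm Walk.nil)) with hQ2
  set Q1 : G.Walk d1 z := (takeW A p).append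
    (Walk.cons hadj.symm (Walk.cons hx2 (Walk.cons hzd2'.symm Walk.nil))) with hQ1
  have hPlen : P.length = B.length - 1 := length_takeW B _ (by omega)
  have hQ2len : Q2.length = 3 := by simp [hQ2]
  have hQ1len : Q1.length = p + 3 := by
    rw [hQ1]
    rw [Walk.length_append, length_takeW A p (by omega)]
    simp
  have hQ1sup : Q1.support = (takeW A p).support ++ [x, d2, z] := by
    rw [hQ1, Walk.support_append]
    simp
  have hQ2sup : Q2.support = [d1, x, d2, z] := by simp [hQ2]
  -- membership characterizations
  have htakeA : ∀ y ∈ (takeW A p).support, ∃ k, k ≤ p ∧ y = A.getVert k :=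
    fun y hy => mem_takeW_support (by omega) hy
  have htakeAsub : ∀ y ∈ (takeW A p).support, y ∈ A.support :=
    fun y hy => support_takeW_subset A p hy
  -- A-interior characterization of Q1/Q2 interiors
  have hAint : ∀ y ∈ (takeW A p).support, y ≠ d1 → y ∈ A.support ∧ y ≠ d1 ∧ y ≠ d2 := by
    intro y hy hyd1
    refine ⟨htakeAsub y hy, hyd1, ?_⟩
    obtain ⟨k, hk, rfl⟩ := htakeA y hy
    intro h
    have h0 : A.getVert k = A.getVert A.length := by rw [h, Walk.getVert_length]
    have := getVert_injective hA (by omega) (by omega) h0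
    omega
  -- interior of P characterization
  have hPint : ∀ y, y ∈ interiorSet P → ∃ k, 1 ≤ k ∧ k ≤ B.length - 2 ∧ y = B.getVert k := by
    intro y hy
    obtain ⟨hy1, hy2, hy3⟩ := hy
    obtain ⟨k, hk, rfl⟩ := mem_takeW_support (p := B) (by omega) hy1
    refine ⟨k, ?_, ?_, rfl⟩
    · rcases Nat.eq_zero_or_pos k with rfl | h
      · exact absurd (Walk.getVert_zero B) hy2
      · omega
    · have : k ≠ B.length - 1 := fun h => hy3 (by rw [h])
      omega
  -- main interior anticompleteness
  have hanti : ∀ a ∈ interiorSet P, ∀ b ∈ interiorSet Q1 ∪ interiorSet Q2,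
      a ≠ b ∧ ¬ G.Adj a b := by
    intro a ha b hb
    obtain ⟨k, hk1, hk2, rfl⟩ := hPint a ha
    have haB : B.getVert k ∈ B.support := getVert_mem_support B (by omega)
    have had1 : B.getVert k ≠ d1 := by
      intro h
      have h0 : B.getVert k = B.getVert 0 := by rw [h, Walk.getVert_zero]
      have := getVert_injective hB (by omega) (by omega) h0
      omega
    have had2 : B.getVert k ≠ d2 := by
      intro h
      have h0 : B.getVert k = B.getVert B.length := by rw [h, Walk.getVert_length]
      have := getVert_injective hB (by omega) (by omega) h0
      omega
    have haz : B.getVert k ≠ z := by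
      intro h
      have := getVert_injective hB (by omega) (by omega) h
      omega
    have hax : B.getVert k ≠ x := fun h => hxB (h ▸ haB)
    have hnadj_d2 : ¬ G.Adj (B.getVert k) d2 := by
      intro h
      have := hBind _ _ haB hd2B h
      have := edge_end hB this
      exact haz this
    have hnadj_x : ¬ G.Adj (B.getVert k) x := by
      intro h
      exact hintB _ haB had1 had2 h.symm
    -- now case on b
    have hbcase : (b ∈ A.support ∧ b ≠ d1 ∧ b ≠ d2) ∨ b = x ∨ b = d2 := by
      rcases hb with hb | hb
      · obtain ⟨hb1, hb2, hb3⟩ := hb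
        rw [hQ1sup] at hb1
        rcases List.mem_append.mp hb1 with hb1 | hb1
        · exact Or.inl (hAint b hb1 hb2)
        · simp only [List.mem_cons, List.mem_singleton, List.not_mem_nil, or_false] at hb1
          rcases hb1 with rfl | rfl | rfl
          · exact Or.inr (Or.inl rfl)
          · exact Or.inr (Or.inr rfl)
          · exact absurd rfl hb3
      · obtain ⟨hb1, hb2, hb3⟩ := hb
        rw [hQ2sup] at hb1
        simp only [List.mem_cons, List.mem_singleton, List.not_mem_nil, or_false] at hb1
        rcases hb1 with rfl | rfl | rfl | rfl
        · exact absurd rfl hb2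
        · exact Or.inr (Or.inl rfl)
        · exact Or.inr (Or.inr rfl)
        · exact absurd rfl hb3
    rcases hbcase with ⟨hbA, hbd1, hbd2⟩ | rfl | rfl
    · constructor
      · intro h
        rcases hinter b hbA (h ▸ haB) with h' | h'
        · exact hbd1 h'
        · exact hbd2 h'
      · intro h
        exact hcross b _ hbA haB hbd1 hbd2 had1 had2 h.symm
    · exact ⟨hax, hnadj_x⟩
    · exact ⟨had2, hnadj_d2⟩
  -- assemble the jewel
  apply hjewel
  refine ⟨d1, z, Q1, Q2, P, ⟨?_, ?_, ?_, ?_, ?_, ?_⟩, ?_⟩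
  · -- Q1 path
    rw [Walk.isPath_def, hQ1sup]
    refine List.Nodup.append (isPath_takeW A p hA).support_nodup ?_ ?_
    · simp only [List.nodup_cons, List.mem_cons, List.mem_singleton, List.not_mem_nil,
        or_false, List.nodup_nil, and_true, not_or]
      exact ⟨⟨hxd2, hxz⟩, hzd2ne.symm, not_false⟩
    · intro y hy hm
      simp only [List.mem_cons, List.mem_singleton, List.not_mem_nil, or_false] at hm
      obtain ⟨k, hk, hky⟩ := htakeA y hy
      rcases hm with hm | hm | hm
      · exact hxA (hm ▸ htakeAsub _ hy)
      · have h0 : A.getVert k = A.getVert A.length := by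
          rw [Walk.getVert_length, ← hky]; exact hm
        have := getVert_injective hA (by omega) (by omega) h0
        omega
      · have hyB : y ∈ B.support := hm ▸ hzB
        rcases hinter _ (htakeAsub _ hy) hyB with h' | h'
        · exact hzd1 (hm ▸ h')
        · exact hzd2ne (hm ▸ h')
  · -- Q2 path
    rw [Walk.isPath_def, hQ2sup]
    simp only [List.nodup_cons, List.mem_cons, List.mem_singleton, List.not_mem_nil,
      or_false, List.nodup_nil, and_true, not_or]
    exact ⟨⟨hxd1.symm, hd12, hzd1.symm⟩, ⟨hxd2, hxz⟩, hzd2ne.symm, not_false⟩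
  · exact isPath_takeW B _ hB
  · -- parity
    rw [hQ1len, hQ2len]
    have := Nat.odd_iff.mp hpodd
    omega
  · -- P long
    rw [hPlen]; omega
  · exact hanti
  · -- order
    rw [hQ1len, hQ2len]
    simp only [max_le_iff]
    omega

end Aux

theorem stmt_17 {V : Type*} (G : SimpleGraph V) (ℓ : ℕ) (hℓ : 5 ≤ ℓ)
    (hcand : Candidate G ℓ)
    {v : V} (c : G.Walk v v) (hc : IsShortestLongOddHole G ℓ c)
    {d1 d2 : V} (x : V) (D : G.Walk d1 d2) (hbase : IsRemoteBase G ℓ c x D)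
    (D' : G.Walk d1 d2) (hD' : IsSubpath G c D')
    (hdisj : ∀ e ∈ D'.edges, e ∉ D.edges)
    (hcover : ∀ e, e ∈ c.edges ↔ e ∈ D.edges ∨ e ∈ D'.edges) :
    Odd D'.length ∧ ℓ + 3 ≤ D'.length ∧
      ∃ w ∈ c.support, G.Adj x w ∧ w ≠ d1 ∧ w ≠ d2 ∧
        ¬ G.Adj w d1 ∧ ¬ G.Adj w d2 := by
  classical
  obtain ⟨⟨⟨hC, hIndc⟩, hople, hodd⟩, hmin⟩ := hc
  obtain ⟨⟨⟨hxc, hmaj⟩, hsubD, hxd1, hxd2, hxintD, hmax⟩, hDlen, hremote⟩ := hbase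
  obtain ⟨hDpath, hDsupc, hDedgec⟩ := hsubD
  obtain ⟨hApath, hAsupc, hAedgec⟩ := hD'
  obtain ⟨hnp, hnj, hnh⟩ := hcand
  -- any long odd hole is longer than 2ℓ+2 and at least c.length
  have hbig : ∀ (w : V) (h : G.Walk w w), IsInducedCycle G h → Odd h.length →
      ℓ ≤ h.length → 2*ℓ+3 ≤ h.length ∧ c.length ≤ h.length := by
    intro w h hic hho hhl
    constructor
    · by_contra hcon
      exact hnh ⟨w, h, ⟨hic, hhl, hho⟩, by omega⟩
    · exact hmin w h ⟨hic, hhl, hho⟩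
  have hn1 : 2*ℓ+3 ≤ c.length := (hbig v c ⟨hC, hIndc⟩ hodd hople).1
  have hd12 : d1 ≠ d2 := by
    intro h
    subst h
    have := isPath_loop_length_zero hDpath
    omega
  -- counting edges
  have hcount : c.length = D.length + D'.length := by
    have h1 : c.edges.toFinset = D.edges.toFinset ∪ D'.edges.toFinset := by
      ext e
      simp only [List.mem_toFinset, Finset.mem_union]
      exact hcover e
    have hdisj2 : Disjoint D.edges.toFinset D'.edges.toFinset := by
      rw [Finset.disjoint_right]
      intro e he
      rw [List.mem_toFinset] at he ⊢
      exact hdisj e he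
    have h2 : c.edges.toFinset.card = D.edges.toFinset.card + D'.edges.toFinset.card := by
      rw [h1, Finset.card_union_of_disjoint hdisj2]
    rw [List.toFinset_card_of_nodup hC.edges_nodup,
      List.toFinset_card_of_nodup hDpath.edges_nodup,
      List.toFinset_card_of_nodup hApath.edges_nodup,
      Walk.length_edges, Walk.length_edges, Walk.length_edges] at h2
    exact h2
  -- every vertex of c is in D or D'
  have hunion : ∀ y ∈ c.support, y ∈ D.support ∨ y ∈ D'.support := by
    intro y hy
    obtain ⟨i, hiv, hile⟩ := Walk.mem_support_iff_exists_getVert.mp hy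
    by_cases hi : i < c.length
    · have he : s(c.getVert i, c.getVert (i+1)) ∈ c.edges :=
        mem_edges_iff_exists.mpr ⟨i, hi, rfl⟩
      rcases (hcover _).mp he with h | h
      · exact Or.inl (hiv ▸ Walk.fst_mem_support_of_mem_edges D h)
      · exact Or.inr (hiv ▸ Walk.fst_mem_support_of_mem_edges D' h)
    · have hieq : i = c.length := by omega
      have he : s(c.getVert (c.length - 1), c.getVert (c.length - 1 + 1)) ∈ c.edges :=
        mem_edges_iff_exists.mpr ⟨c.length - 1, by omega, rfl⟩
      rw [show c.length - 1 + 1 = c.length by omega] at he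
      have hyv : c.getVert c.length = y := hieq ▸ hiv
      rw [hyv] at he
      rcases (hcover _).mp he with h | h
      · exact Or.inl (Walk.snd_mem_support_of_mem_edges D h)
      · exact Or.inr (Walk.snd_mem_support_of_mem_edges D' h)
  -- supports intersect exactly in the two ends
  have hinterDD' : ∀ y, y ∈ D'.support → y ∈ D.support → y = d1 ∨ y = d2 := by
    have hvtail : ∀ {a b : V} (p : G.Walk a b), 0 < p.length → b ∈ p.support.tail := by
      intro a b p hp
      cases p with
      | nil => simp at hp
      | cons h q => simpa using q.end_mem_support
    have hSC : c.support.toFinset.card = c.length := by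
      have h1 : c.support.toFinset = c.support.tail.toFinset := by
        conv_lhs => rw [Walk.support_eq_cons]
        rw [List.toFinset_cons, Finset.insert_eq_self]
        exact List.mem_toFinset.mpr (hvtail c (by omega))
      rw [h1, List.toFinset_card_of_nodup hC.support_nodup]
      have := Walk.length_support c
      have h2 : c.support.tail.length = c.support.length - 1 := by
        rw [Walk.support_eq_cons]
        simp
      omega
    have hSD : D.support.toFinset.card = D.length + 1 := by
      rw [List.toFinset_card_of_nodup hDpath.support_nodup, Walk.length_support]
    have hSA : D'.support.toFinset.card = D'.length + 1 := by
      rw [List.toFinset_card_of_nodup hApath.support_nodup, Walk.length_support]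
    have hun : D.support.toFinset ∪ D'.support.toFinset = c.support.toFinset := by
      apply Finset.Subset.antisymm
      · intro y hy
        rcases Finset.mem_union.mp hy with h | h
        · exact List.mem_toFinset.mpr (hDsupc _ (List.mem_toFinset.mp h))
        · exact List.mem_toFinset.mpr (hAsupc _ (List.mem_toFinset.mp h))
      · intro y hy
        rcases hunion y (List.mem_toFinset.mp hy) with h | h
        · exact Finset.mem_union.mpr (Or.inl (List.mem_toFinset.mpr h))
        · exact Finset.mem_union.mpr (Or.inr (List.mem_toFinset.mpr h))
    have hcardinter : (D.support.toFinset ∩ D'.support.toFinset).card = 2 := by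
      have := Finset.card_inter_add_card_union D.support.toFinset D'.support.toFinset
      rw [hun, hSC, hSD, hSA] at this
      omega
    have hsub : ({d1, d2} : Finset V) ⊆ D.support.toFinset ∩ D'.support.toFinset := by
      intro y hy
      rcases Finset.mem_insert.mp hy with rfl | hy
      · exact Finset.mem_inter.mpr ⟨List.mem_toFinset.mpr D.start_mem_support,
          List.mem_toFinset.mpr D'.start_mem_support⟩
      · rw [Finset.mem_singleton] at hy
        subst hy
        exact Finset.mem_inter.mpr ⟨List.mem_toFinset.mpr D.end_mem_support,
          List.mem_toFinset.mpr D'.end_mem_support⟩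
    have heq : ({d1, d2} : Finset V) = D.support.toFinset ∩ D'.support.toFinset :=
      Finset.eq_of_subset_of_card_le hsub (by rw [hcardinter, Finset.card_pair hd12])
    intro y hyA hyD
    have : y ∈ ({d1, d2} : Finset V) := by
      rw [heq]
      exact Finset.mem_inter.mpr ⟨List.mem_toFinset.mpr hyD, List.mem_toFinset.mpr hyA⟩
    simpa using this
  have hxAsup : x ∉ D'.support := fun h => hxc (hAsupc _ h)
  have hxBsup : x ∉ D.support := fun h => hxc (hDsupc _ h)
  have hL1 : 1 ≤ D'.length := by
    by_contra h
    have h0 : D'.length = 0 := by omega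
    have h1 : D'.getVert D'.length = d2 := Walk.getVert_length D'
    rw [h0, Walk.getVert_zero] at h1
    exact hd12 h1
  -- within D' induced
  have hAind : ∀ y z, y ∈ D'.support → z ∈ D'.support → G.Adj y z → s(y,z) ∈ D'.edges := by
    intro y z hy hz hadj
    have he := hIndc y z (hAsupc _ hy) (hAsupc _ hz) hadj
    rcases (hcover _).mp he with h | h
    · exfalso
      have hyD : y ∈ D.support := Walk.fst_mem_support_of_mem_edges D h
      have hzD : z ∈ D.support := Walk.snd_mem_support_of_mem_edges D h
      have h12 : s(d1, d2) ∈ D.edges := by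
        rcases hinterDD' y hy hyD with rfl | rfl <;>
          rcases hinterDD' z hz hzD with rfl | rfl
        · exact absurd rfl hadj.ne
        · exact h
        · rw [Sym2.eq_swap]; exact h
        · exact absurd rfl hadj.ne
      have := edge_start hDpath h12
      have h1 : D.getVert 1 = D.getVert D.length := by
        rw [← this, Walk.getVert_length]
      have := getVert_injective hDpath (by omega) (by omega) h1
      omega
    · exact h
  -- L ≥ 3 via majorness
  have hL3 : 3 ≤ D'.length := by
    by_contra hcon
    apply hmaj
    have hnbr : ∀ y, y ∈ c.support → G.Adj x y →
        y = d1 ∨ y = d2 ∨ ∃ k, 1 ≤ k ∧ k ≤ D'.length - 1 ∧ y = D'.getVert k := by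
      intro y hy hxy
      rcases hunion y hy with h | h
      · by_cases h1 : y = d1
        · exact Or.inl h1
        by_cases h2 : y = d2
        · exact Or.inr (Or.inl h2)
        exact absurd hxy (hxintD y ⟨h, h1, h2⟩)
      · obtain ⟨k, hk, hkle⟩ := Walk.mem_support_iff_exists_getVert.mp h
        rcases Nat.eq_zero_or_pos k with rfl | hk0
        · rw [Walk.getVert_zero] at hk
          exact Or.inl hk.symm
        by_cases hkL : k = D'.length
        · rw [hkL, Walk.getVert_length] at hk
          exact Or.inr (Or.inl hk.symm)
        exact Or.inr (Or.inr ⟨k, by omega, by omega, hk.symm⟩)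
    by_cases hL : D'.length = 1
    · -- triple (d2, d1, D.getVert 1)
      have hedge1 : s(d2, d1) ∈ c.edges := by
        rw [Sym2.eq_swap]
        apply (hcover _).mpr
        right
        refine mem_edges_iff_exists.mpr ⟨0, by omega, ?_⟩
        rw [Walk.getVert_zero]
        congr 1
        rw [show (0+1 : ℕ) = D'.length by omega, Walk.getVert_length]
      have hedge2 : s(d1, D.getVert 1) ∈ c.edges := by
        apply (hcover _).mpr
        left
        refine mem_edges_iff_exists.mpr ⟨0, by omega, ?_⟩
        rw [Walk.getVert_zero]
      refine ⟨d2, d1, D.getVert 1, hedge1, hedge2, ?_, ?_⟩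
      · intro h
        have h1 : D.getVert 1 = D.getVert D.length := by
          rw [← h, Walk.getVert_length]
        have := getVert_injective hDpath (by omega) (by omega) h1
        omega
      · intro y hy hxy
        rcases hnbr y hy hxy with rfl | rfl | ⟨k, hk1, hk2, rfl⟩
        · exact Or.inr (Or.inl rfl)
        · exact Or.inl rfl
        · omega
    · -- L = 2, triple (d1, D'.getVert 1, d2)
      have hL2 : D'.length = 2 := by omega
      have hedge1 : s(d1, D'.getVert 1) ∈ c.edges := by
        apply (hcover _).mpr
        right
        refine mem_edges_iff_exists.mpr ⟨0, by omega, ?_⟩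
        rw [Walk.getVert_zero]
      have hedge2 : s(D'.getVert 1, d2) ∈ c.edges := by
        apply (hcover _).mpr
        right
        refine mem_edges_iff_exists.mpr ⟨1, by omega, ?_⟩
        congr 1
        rw [show (1+1 : ℕ) = D'.length by omega, Walk.getVert_length]
      refine ⟨d1, D'.getVert 1, d2, hedge1, hedge2, hd12, ?_⟩
      intro y hy hxy
      rcases hnbr y hy hxy with rfl | rfl | ⟨k, hk1, hk2, rfl⟩
      · exact Or.inl rfl
      · exact Or.inr (Or.inr rfl)
      · have : k = 1 := by omega
        subst this
        exact Or.inr (Or.inl rfl)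
  -- within D induced
  have hBind : ∀ y z, y ∈ D.support → z ∈ D.support → G.Adj y z → s(y,z) ∈ D.edges := by
    intro y z hy hz hadj
    have he := hIndc y z (hDsupc _ hy) (hDsupc _ hz) hadj
    rcases (hcover _).mp he with h | h
    · exact h
    · exfalso
      have hyA : y ∈ D'.support := Walk.fst_mem_support_of_mem_edges D' h
      have hzA : z ∈ D'.support := Walk.snd_mem_support_of_mem_edges D' h
      have h12 : s(d1, d2) ∈ D'.edges := by
        rcases hinterDD' y hyA hy with rfl | rfl <;>
          rcases hinterDD' z hzA hz with rfl | rfl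
        · exact absurd rfl hadj.ne
        · exact h
        · rw [Sym2.eq_swap]; exact h
        · exact absurd rfl hadj.ne
      have := edge_start hApath h12
      have h1 : D'.getVert 1 = D'.getVert D'.length := by
        rw [← this, Walk.getVert_length]
      have := getVert_injective hApath (by omega) (by omega) h1
      omega
  -- interior of D and D' are non-adjacent
  have hcross : ∀ a b, a ∈ D'.support → b ∈ D.support → a ≠ d1 → a ≠ d2 → b ≠ d1 →
      b ≠ d2 → ¬ G.Adj a b := by
    intro a b ha hb ha1 ha2 hb1 hb2 hadj
    have he := hIndc a b (hAsupc _ ha) (hDsupc _ hb) hadj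
    rcases (hcover _).mp he with h | h
    · have haD : a ∈ D.support := Walk.fst_mem_support_of_mem_edges D h
      rcases hinterDD' a ha haD with h' | h'
      · exact ha1 h'
      · exact ha2 h'
    · have hbA : b ∈ D'.support := Walk.snd_mem_support_of_mem_edges D' h
      rcases hinterDD' b hbA hb with h' | h'
      · exact hb1 h'
      · exact hb2 h'
  -- Step (a): D has even length, so D' has odd length
  have hMeven : ¬ Odd D.length := by
    intro hModd
    obtain ⟨H, hHic, hHlen⟩ := hole_aux D hDpath hBind hxd1 hxd2 hd12 hxBsup
      (fun y hy h1 h2 => hxintD y ⟨hy, h1, h2⟩)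
    have hHodd : Odd H.length := by
      rw [Nat.odd_iff] at hModd ⊢
      omega
    have := (hbig x H hHic hHodd (by omega)).2
    omega
  have hLodd : Odd D'.length := by
    rw [Nat.odd_iff] at hodd ⊢
    rw [Nat.odd_iff] at hMeven
    omega
  -- Step (b): simple jewel gives L ≥ ℓ + 2
  have hLge : ℓ + 2 ≤ D'.length := by
    by_contra hcon
    apply hnj
    refine ⟨d1, d2, D', Walk.cons hxd1.symm (Walk.cons hxd2 Walk.nil), D,
      ⟨hApath, ?_, hDpath, ?_, by omega, ?_⟩, ?_⟩
    · rw [Walk.isPath_def]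
      simp only [Walk.support_cons, Walk.support_nil, List.nodup_cons, List.mem_cons,
        List.mem_singleton, List.not_mem_nil, or_false, List.nodup_nil, and_true, not_or]
      exact ⟨⟨hxd1.ne', hd12⟩, hxd2.ne, not_false⟩
    · have h2 : (Walk.cons hxd1.symm (Walk.cons hxd2 Walk.nil) : G.Walk d1 d2).length = 2 := by
        simp
      rw [h2]
      have := Nat.odd_iff.mp hLodd
      omega
    · -- anticompleteness
      intro a ha b hb
      obtain ⟨haD, had1, had2⟩ := ha
      have haA : a ∉ D'.support := by
        intro h
        rcases hinterDD' a h haD with h' | h'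
        · exact had1 h'
        · exact had2 h'
      rcases hb with hb | hb
      · obtain ⟨hbA, hbd1, hbd2⟩ := hb
        refine ⟨fun h => haA (h ▸ hbA), fun h => hcross b a hbA haD hbd1 hbd2 had1 had2 h.symm⟩
      · obtain ⟨hbsup, hbd1, hbd2⟩ := hb
        simp only [Walk.support_cons, Walk.support_nil, List.mem_cons, List.mem_singleton,
          List.not_mem_nil, or_false] at hbsup
        rcases hbsup with rfl | rfl | rfl
        · exact absurd rfl hbd1
        · exact ⟨fun h => hxc (h ▸ hDsupc _ haD), fun h => hxintD a ⟨haD, had1, had2⟩ h.symm⟩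
        · exact absurd rfl hbd2
    · -- order
      have h2 : (Walk.cons hxd1.symm (Walk.cons hxd2 Walk.nil) : G.Walk d1 d2).length = 2 := by
        simp
      rw [h2]
      simp only [max_le_iff]
      omega
  -- chord jewel exclusions
  have hchord : ∀ k, 1 ≤ k → k < D'.length → G.Adj x (D'.getVert k) →
      ¬(Odd k ∧ k + 2 ≤ ℓ) := by
    rintro k h1 h2 hadj ⟨hodd', hle⟩
    exact chord_jewel hℓ D' D hApath hDpath hDlen hxAsup hxBsup hxd1 hxd2
      (fun y ha hb => hinterDD' y ha hb)
      (fun y hy hy1 hy2 => hxintD y ⟨hy, hy1, hy2⟩)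
      hcross hBind hnj k h1 hle hodd' h2 hadj
  have hchordR : ∀ k, 1 ≤ k → k < D'.length → G.Adj x (D'.getVert k) →
      ¬(Odd (D'.length - k) ∧ (D'.length - k) + 2 ≤ ℓ) := by
    rintro k h1 h2 hadj ⟨hodd', hle⟩
    refine chord_jewel hℓ D'.reverse D.reverse hApath.reverse hDpath.reverse
      (by rw [Walk.length_reverse]; exact hDlen)
      (by rw [Walk.support_reverse, List.mem_reverse]; exact hxAsup)
      (by rw [Walk.support_reverse, List.mem_reverse]; exact hxBsup)
      hxd2 hxd1 ?_ ?_ ?_ ?_ hnj (D'.length - k) (by omega) hle hodd'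
      (by rw [Walk.length_reverse]; omega) ?_
    · intro y ha hb
      rw [Walk.support_reverse, List.mem_reverse] at ha hb
      exact (hinterDD' y ha hb).symm
    · intro y hy hy2 hy1
      rw [Walk.support_reverse, List.mem_reverse] at hy
      exact hxintD y ⟨hy, hy1, hy2⟩
    · intro a b ha hb ha2 ha1 hb2 hb1
      rw [Walk.support_reverse, List.mem_reverse] at ha hb
      exact hcross a b ha hb ha1 ha2 hb1 hb2
    · intro y z hy hz hadj'
      rw [Walk.support_reverse, List.mem_reverse] at hy hz
      rw [Walk.edges_reverse, List.mem_reverse]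
      exact hBind y z hy hz hadj'
    · rw [Walk.getVert_reverse, show D'.length - (D'.length - k) = k by omega]
      exact hadj
  -- Claim A : a deep interior neighbour exists
  have hclaimA : ∃ k, 2 ≤ k ∧ k ≤ D'.length - 2 ∧ G.Adj x (D'.getVert k) := by
    by_contra hcon
    push_neg at hcon
    have hnoint : ∀ y ∈ D'.support, y ≠ d1 → y ≠ d2 → ¬ G.Adj x y := by
      intro y hy h1 h2 hadj
      obtain ⟨k, hk, hkle⟩ := Walk.mem_support_iff_exists_getVert.mp hy
      have hk0 : k ≠ 0 := by
        intro h
        rw [h, Walk.getVert_zero] at hk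
        exact h1 hk.symm
      have hkL : k ≠ D'.length := by
        intro h
        rw [h, Walk.getVert_length] at hk
        exact h2 hk.symm
      by_cases hk1 : k = 1
      · subst hk1
        exact hchord 1 le_rfl (by omega) (hk ▸ hadj) ⟨odd_one, by omega⟩
      by_cases hk2 : k = D'.length - 1
      · subst hk2
        refine hchordR (D'.length - 1) (by omega) (by omega) (hk ▸ hadj) ?_
        rw [show D'.length - (D'.length - 1) = 1 by omega]
        exact ⟨odd_one, by omega⟩
      · exact hcon k (by omega) (by omega) (hk ▸ hadj)
    obtain ⟨H, hHic, hHlen⟩ := hole_aux D' hApath hAind hxd1 hxd2 hd12 hxAsup hnoint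
    have hHodd : Odd H.length := by
      rw [Nat.odd_iff] at hLodd ⊢
      omega
    have := (hbig x H hHic hHodd (by omega)).2
    omega
  -- Claim B : L ≥ ℓ + 3
  have hLge3 : ℓ + 3 ≤ D'.length := by
    by_contra hcon
    have hLeq : D'.length = ℓ + 2 := by omega
    have hlodd : ℓ % 2 = 1 := by
      rw [Nat.odd_iff] at hLodd
      omega
    have hpos : ∀ k, 1 ≤ k → k < D'.length → G.Adj x (D'.getVert k) → k = 2 ∨ k = ℓ := by
      intro k h1 h2 hadj
      have hc1 := hchord k h1 h2 hadj
      have hc2 := hchordR k h1 h2 hadj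
      rcases Nat.even_or_odd k with he | ho
      · have hLk : Odd (D'.length - k) := by
          rw [Nat.odd_iff]
          have := Nat.even_iff.mp he
          omega
        have h3 : ¬(D'.length - k + 2 ≤ ℓ) := fun hh => hc2 ⟨hLk, hh⟩
        have := Nat.even_iff.mp he
        left
        omega
      · have h3 : ¬(k + 2 ≤ ℓ) := fun hh => hc1 ⟨ho, hh⟩
        have := Nat.odd_iff.mp ho
        right
        omega
    -- hole between positions i < j on D'
    have hmk : ∀ i j, i ≤ j → j ≤ D'.length → G.Adj x (D'.getVert i) → G.Adj x (D'.getVert j) →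
        (∀ k, i < k → k < j → ¬ G.Adj x (D'.getVert k)) → Odd (j - i) →
        ℓ ≤ j - i + 2 → j - i + 2 ≤ 2*ℓ+2 → i < j → False := by
      intro i j hij hjle hxi hxj hnomid hoddji hge hle2 hlt
      have hdlen : (dropW D' i).length = D'.length - i := length_dropW D' i (by omega)
      have hWlen : (takeW (dropW D' i) (j-i)).length = j - i := by
        rw [length_takeW _ _ (by omega)]
      have hend : (dropW D' i).getVert (j - i) = D'.getVert j := by
        rw [getVert_dropW]
        congr 1
        omega
      have hWget : ∀ k, k ≤ j - i → (takeW (dropW D' i) (j-i)).getVert k = D'.getVert (i+k) := by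
        intro k hk
        rw [getVert_takeW _ _ _ hk, getVert_dropW]
      have hWsub : ∀ y ∈ (takeW (dropW D' i) (j-i)).support, y ∈ D'.support := by
        intro y hy
        have := support_takeW_subset (dropW D' i) (j-i) hy
        rw [support_dropW D' i (by omega)] at this
        exact List.drop_subset _ _ this
      have hWpath : (takeW (dropW D' i) (j-i)).IsPath :=
        isPath_takeW _ _ (isPath_dropW D' i (by omega) hApath)
      have hends : D'.getVert i ≠ (dropW D' i).getVert (j - i) := by
        rw [hend]
        intro h
        have := getVert_injective hApath (by omega) (by omega) h
        omega
      have hintW : ∀ y ∈ (takeW (dropW D' i) (j-i)).support, y ≠ D'.getVert i →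
          y ≠ (dropW D' i).getVert (j - i) → ¬ G.Adj x y := by
        intro y hy hy1 hy2 hadj
        obtain ⟨k, hk, hkle⟩ := Walk.mem_support_iff_exists_getVert.mp hy
        rw [hWlen] at hkle
        rw [hWget k hkle] at hk
        have hk0 : k ≠ 0 := by
          intro h
          rw [h, Nat.add_zero] at hk
          exact hy1 hk.symm
        have hkj : i + k ≠ j := by
          intro h
          rw [h, ← hend] at hk
          exact hy2 hk.symm
        exact hnomid (i+k) (by omega) (by omega) (hk ▸ hadj)
      obtain ⟨H, hHic, hHlen⟩ := hole_aux (takeW (dropW D' i) (j-i)) hWpath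
        (window_ind hApath hAind i j hij hjle) hxi (hend ▸ hxj) hends
        (fun h => hxAsup (hWsub x h)) hintW
      have hHodd : Odd H.length := by
        rw [Nat.odd_iff] at hoddji ⊢
        rw [hHlen, hWlen]
        omega
      have := (hbig x H hHic hHodd (by rw [hHlen, hWlen]; omega)).1
      rw [hHlen, hWlen] at this
      omega
    by_cases h2a : G.Adj x (D'.getVert 2) <;> by_cases hla : G.Adj x (D'.getVert ℓ)
    · refine hmk 2 ℓ (by omega) (by omega) h2a hla ?_ ?_ (by omega) (by omega) (by omega)
      · intro k hk1 hk2 hadjk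
        rcases hpos k (by omega) (by omega) hadjk with rfl | rfl
        · omega
        · omega
      · rw [Nat.odd_iff]; omega
    · refine hmk 2 D'.length (by omega) le_rfl h2a ?_ ?_ ?_ (by omega) (by omega) (by omega)
      · rw [Walk.getVert_length]; exact hxd2
      · intro k hk1 hk2 hadjk
        rcases hpos k (by omega) (by omega) hadjk with rfl | rfl
        · omega
        · exact hla hadjk
      · rw [Nat.odd_iff]; rw [Nat.odd_iff] at hLodd; omega
    · refine hmk 0 ℓ (by omega) (by omega) ?_ hla ?_ ?_ (by omega) (by omega) (by omega)
      · rw [Walk.getVert_zero]; exact hxd1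
      · intro k hk1 hk2 hadjk
        rcases hpos k (by omega) (by omega) hadjk with rfl | rfl
        · exact h2a hadjk
        · omega
      · rw [Nat.odd_iff]; omega
    · refine hmk 0 D'.length (by omega) le_rfl ?_ ?_ ?_ ?_ (by omega) (by omega) (by omega)
      · rw [Walk.getVert_zero]; exact hxd1
      · rw [Walk.getVert_length]; exact hxd2
      · intro k hk1 hk2 hadjk
        rcases hpos k (by omega) (by omega) hadjk with rfl | rfl
        · exact h2a hadjk
        · exact hla hadjk
      · simpa using hLodd
  -- conclusion
  obtain ⟨p, hp2, hpL2, hpadj⟩ := hclaimA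
  have hpd1 : D'.getVert p ≠ d1 := by
    intro h
    have h0 : D'.getVert p = D'.getVert 0 := by rw [h, Walk.getVert_zero]
    have := getVert_injective hApath (by omega) (by omega) h0
    omega
  have hpd2 : D'.getVert p ≠ d2 := by
    intro h
    have h0 : D'.getVert p = D'.getVert D'.length := by rw [h, Walk.getVert_length]
    have := getVert_injective hApath (by omega) (by omega) h0
    omega
  have hpsup : D'.getVert p ∈ D'.support := getVert_mem_support D' (by omega)
  refine ⟨hLodd, hLge3, D'.getVert p, hAsupc _ hpsup, hpadj, hpd1, hpd2, ?_, ?_⟩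
  · intro hadj
    have he := hIndc _ _ (hAsupc _ hpsup) (hAsupc _ D'.start_mem_support) hadj
    rcases (hcover _).mp he with h | h
    · have hpD : D'.getVert p ∈ D.support := Walk.fst_mem_support_of_mem_edges D h
      rcases hinterDD' _ hpsup hpD with h' | h'
      · exact hpd1 h'
      · exact hpd2 h'
    · rw [Sym2.eq_swap] at h
      have := edge_start hApath h
      have h0 : D'.getVert p = D'.getVert 1 := this
      have := getVert_injective hApath (by omega) (by omega) h0
      omega
  · intro hadj
    have he := hIndc _ _ (hAsupc _ hpsup) (hAsupc _ D'.end_mem_support) hadj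
    rcases (hcover _).mp he with h | h
    · have hpD : D'.getVert p ∈ D.support := Walk.fst_mem_support_of_mem_edges D h
      rcases hinterDD' _ hpsup hpD with h' | h'
      · exact hpd1 h'
      · exact hpd2 h'
    · have := edge_end hApath h
      have h0 : D'.getVert p = D'.getVert (D'.length - 1) := this
      have := getVert_injective hApath (by omega) (by omega) h0
      omega


end LOH
end
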